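/- arXiv:2504.07284 — 3 statements merged into one kernel-verified Lean document; each statement's English description precedes it below -/
import Mathlib

section
/- Let r ≥ 3 be an integer and let α ∈ (0, 1/r). Then there exist a constant c > 0 and a sequence (G*_n) of balanced r-partite graphs on rn vertices with δ*(G*_n) ≥ αn such that if p = p(n) ≤ c n^{-2/r}, then with high probability G*_n ∪ G_r(n,p) contains no perfect K_r-tiling. (One such G*_n: split each class V_i = A_i ⊔ B_i with |A_i| = αn and |B_i| = (1−α)n, include all edges between A_i and A_j and between A_i and B_j for all i ≠ j, and no edges between B_i and B_j.) -/
open MeasureTheory Filter Finset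
open scoped Classical

abbrev MV (r n : ℕ) := Fin r × Fin n

noncomputable def bernoulliMeasure (p : ℝ) : Measure Bool :=
  ENNReal.ofReal p • Measure.dirac true + ENNReal.ofReal (1 - p) • Measure.dirac false

noncomputable def grpMeasure (r n : ℕ) (p : ℝ) :
    Measure (Sym2 (MV r n) → Bool) :=
  Measure.pi fun _ => bernoulliMeasure p

def sampleGraph (r n : ℕ) (ω : Sym2 (MV r n) → Bool) : SimpleGraph (MV r n) where
  Adj u v := u.1 ≠ v.1 ∧ ω s(u, v) = true
  symm := ⟨fun u v h => ⟨h.1.symm, by rw [Sym2.eq_swap]; exact h.2⟩⟩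
  loopless := ⟨fun u h => h.1 rfl⟩

def sampleGraphTail (r n : ℕ) (ω : Sym2 (MV r n) → Bool) : SimpleGraph (MV r n) where
  Adj u v := u.1 ≠ v.1 ∧ u.1.val ≠ 0 ∧ v.1.val ≠ 0 ∧ ω s(u, v) = true
  symm := ⟨fun u v h => ⟨h.1.symm, h.2.2.1, h.2.1, by rw [Sym2.eq_swap]; exact h.2.2.2⟩⟩
  loopless := ⟨fun u h => h.1 rfl⟩

def IsMultipartite (r n : ℕ) (G : SimpleGraph (MV r n)) : Prop :=
  ∀ u v, G.Adj u v → u.1 ≠ v.1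

noncomputable def classFinset (r n : ℕ) (i : ℕ) : Finset (MV r n) :=
  Finset.univ.filter (fun v => v.1.val = i)

noncomputable def degIn (r n : ℕ) (G : SimpleGraph (MV r n)) (v : MV r n) (j : Fin r) : ℕ :=
  Set.ncard {u : MV r n | u.1 = j ∧ G.Adj v u}

def MinDegCond (r n : ℕ) (G : SimpleGraph (MV r n)) (a : ℝ) : Prop :=
  ∀ v : MV r n, ∀ j : Fin r, j ≠ v.1 → a ≤ (degIn r n G v j : ℝ)

def IsKrTiling {W : Type*} (G : SimpleGraph W) (r : ℕ) (T : Finset (Finset W)) : Prop :=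
  (∀ t ∈ T, t.card = r ∧ G.IsClique (t : Set W)) ∧
  (T : Set (Finset W)).PairwiseDisjoint id

def HasPerfectKrTiling {W : Type*} (G : SimpleGraph W) (r : ℕ) : Prop :=
  ∃ T : Finset (Finset W), IsKrTiling G r T ∧ ∀ v : W, ∃ t ∈ T, v ∈ t

noncomputable def relDensity {A B : Type*} (R : A → B → Prop) (s : Finset A) (t : Finset B) : ℝ :=
  (Set.ncard {p : A × B | p.1 ∈ s ∧ p.2 ∈ t ∧ R p.1 p.2} : ℝ) / ((s.card : ℝ) * (t.card : ℝ))

def IsRegularPairR {A B : Type*} (R : A → B → Prop) (ε : ℝ) (s : Finset A) (t : Finset B) : Prop :=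
  ∀ X ⊆ s, ∀ Y ⊆ t, ε * s.card ≤ X.card → ε * t.card ≤ Y.card →
    |relDensity R s t - relDensity R X Y| < ε

def IsSuperRegularR {A B : Type*} (R : A → B → Prop) (ε d : ℝ) (s : Finset A) (t : Finset B) : Prop :=
  (∀ X ⊆ s, ∀ Y ⊆ t, ε * s.card ≤ X.card → ε * t.card ≤ Y.card → d < relDensity R X Y) ∧
  (∀ a ∈ s, d * t.card < (Set.ncard {b | b ∈ t ∧ R a b} : ℝ)) ∧
  (∀ b ∈ t, d * s.card < (Set.ncard {a | a ∈ s ∧ R a b} : ℝ))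

def IsTupleF (r n : ℕ) (G : SimpleGraph (MV r n)) (d : ℝ)
    (g : {k : Fin r // k.val ≠ 0} → MV r n) : Prop :=
  (∀ k, (g k).1 = k.1) ∧
  ((d/2)^(r-1) * n ≤ (Set.ncard {u : MV r n | u.1.val = 0 ∧ ∀ k, G.Adj u (g k)} : ℝ))


-- ========== auxiliary lemmas ==========

section Aux

open scoped ENNReal

instance bernoulli_finite (p : ℝ) : IsFiniteMeasure (bernoulliMeasure p) := by
  constructor
  simp only [bernoulliMeasure, Measure.coe_add, Measure.coe_smul, Pi.add_apply, Pi.smul_apply,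
    smul_eq_mul]
  exact ENNReal.add_lt_top.2 ⟨ENNReal.mul_lt_top ENNReal.ofReal_lt_top (measure_lt_top _ _),
    ENNReal.mul_lt_top ENNReal.ofReal_lt_top (measure_lt_top _ _)⟩

lemma bern_true (p : ℝ) : bernoulliMeasure p {true} = ENNReal.ofReal p := by
  simp [bernoulliMeasure, Measure.dirac_apply]

lemma bern_univ (p : ℝ) (h0 : 0 ≤ p) (h1 : p ≤ 1) : bernoulliMeasure p Set.univ = 1 := by
  simp [bernoulliMeasure]
  rw [← ENNReal.ofReal_add h0 (by linarith)]
  norm_num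

lemma allMeasurable {r n : ℕ} (s : Set (Sym2 (MV r n) → Bool)) : MeasurableSet s :=
  (Set.toFinite s).measurableSet

lemma grp_forall_true (r n : ℕ) (p : ℝ) (h0 : 0 ≤ p) (h1 : p ≤ 1)
    (E : Finset (Sym2 (MV r n))) :
    grpMeasure r n p {ω | ∀ e ∈ E, ω e = true} = (ENNReal.ofReal p) ^ E.card := by
  have hset : {ω : Sym2 (MV r n) → Bool | ∀ e ∈ E, ω e = true} =
      Set.univ.pi (fun e => if e ∈ E then {true} else Set.univ) := by
    ext ω
    simp only [Set.mem_setOf_eq, Set.mem_pi, Set.mem_univ, forall_true_left]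
    constructor
    · intro h e; split <;> simp_all
    · intro h e he; have := h e; simp [he] at this; exact this
  rw [hset, grpMeasure, Measure.pi_pi]
  have : ∀ e : Sym2 (MV r n), (bernoulliMeasure p) (if e ∈ E then {true} else Set.univ)
      = if e ∈ E then ENNReal.ofReal p else 1 := by
    intro e; split
    · exact bern_true p
    · exact bern_univ p h0 h1
  simp only [this]
  rw [Finset.prod_ite_mem, Finset.univ_inter, Finset.prod_const]

lemma grp_univ (r n : ℕ) (p : ℝ) (h0 : 0 ≤ p) (h1 : p ≤ 1) :
    grpMeasure r n p Set.univ = 1 := by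
  have := grp_forall_true r n p h0 h1 ∅
  simpa using this

lemma markov_count {r n : ℕ} (μ : Measure (Sym2 (MV r n) → Bool)) {ι : Type*}
    (S : Finset ι) (A : ι → Set (Sym2 (MV r n) → Bool)) (Bad : Set (Sym2 (MV r n) → Bool))
    (k : ℕ) (h : ∀ ω ∈ Bad, k ≤ (S.filter (fun i => ω ∈ A i)).card) :
    (k : ENNReal) * μ Bad ≤ ∑ i ∈ S, μ (A i) := by
  have key : ∀ ω, Bad.indicator (fun _ => (k : ENNReal)) ω ≤
      ∑ i ∈ S, (A i).indicator (fun _ => (1 : ENNReal)) ω := by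
    intro ω
    by_cases hω : ω ∈ Bad
    · rw [Set.indicator_of_mem hω]
      have : ∑ i ∈ S, (A i).indicator (fun _ => (1 : ENNReal)) ω
          = ((S.filter (fun i => ω ∈ A i)).card : ENNReal) := by
        rw [Finset.card_filter]
        push_cast
        refine Finset.sum_congr rfl fun i _ => ?_
        by_cases hi : ω ∈ A i <;> simp [hi]
      rw [this]
      exact_mod_cast Nat.cast_le.2 (h ω hω)
    · rw [Set.indicator_of_notMem hω]; exact zero_le
  calc (k : ENNReal) * μ Bad = ∫⁻ ω, Bad.indicator (fun _ => (k : ENNReal)) ω ∂μ := by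
        rw [lintegral_indicator_const (allMeasurable _)]
    _ ≤ ∫⁻ ω, ∑ i ∈ S, (A i).indicator (fun _ => (1 : ENNReal)) ω ∂μ := lintegral_mono key
    _ = ∑ i ∈ S, μ (A i) := by
        rw [lintegral_finset_sum _ (fun i _ => (measurable_const.indicator (allMeasurable _)))]
        simp only [lintegral_indicator_const (allMeasurable _), one_mul]

lemma two_pairs (r : ℕ) : 2 * (Finset.univ.filter (fun q : Fin r × Fin r => q.1 < q.2)).card
    = r * (r - 1) := by
  have hswap : (Finset.univ.filter (fun q : Fin r × Fin r => q.1 < q.2)).card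
      = (Finset.univ.filter (fun q : Fin r × Fin r => q.2 < q.1)).card := by
    apply Finset.card_bij (fun q _ => (q.2, q.1))
    · intro q hq; simp at hq ⊢; exact hq
    · intro a ha b hb hab; simp at hab; ext
      · exact congrArg Fin.val hab.2
      · exact congrArg Fin.val hab.1
    · intro q hq; exact ⟨(q.2, q.1), by simp at hq ⊢; exact hq, rfl⟩
  have hunion : (Finset.univ.filter (fun q : Fin r × Fin r => q.1 < q.2)) ∪
      (Finset.univ.filter (fun q : Fin r × Fin r => q.2 < q.1)) =
      (Finset.univ.filter (fun q : Fin r × Fin r => q.1 ≠ q.2)) := by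
    ext q; simp only [Finset.mem_union, Finset.mem_filter, Finset.mem_univ, true_and]
    constructor
    · rintro (h | h); exact h.ne; exact h.ne'
    · intro h; exact lt_or_gt_of_ne h
  have hdisj : Disjoint (Finset.univ.filter (fun q : Fin r × Fin r => q.1 < q.2))
      (Finset.univ.filter (fun q : Fin r × Fin r => q.2 < q.1)) := by
    rw [Finset.disjoint_filter]
    intro q _ h1 h2; exact absurd h2 (not_lt_of_gt h1)
  have hne : (Finset.univ.filter (fun q : Fin r × Fin r => q.1 ≠ q.2)) = Finset.univ.offDiag := by
    ext q; simp [Finset.mem_offDiag]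
  have hcard := Finset.card_union_of_disjoint hdisj
  rw [hunion, hne, Finset.offDiag_card, ← hswap] at hcard
  simp only [Finset.card_univ, Fintype.card_prod, Fintype.card_fin] at hcard
  rw [two_mul, ← hcard]
  cases r with
  | zero => simp
  | succ r => simp [Nat.succ_sub_one]; ring_nf; omega

def PDfam (r n m : ℕ) (F : Fin m → Fin r → Fin n) : Prop :=
  ∀ a b : Fin m, a ≠ b → ∀ i : Fin r, F a i ≠ F b i

def presentFam (r n m : ℕ) (F : Fin m → Fin r → Fin n) (ω : Sym2 (MV r n) → Bool) : Prop :=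
  ∀ a : Fin m, ∀ i j : Fin r, i ≠ j → ω s(((i, F a i) : MV r n), (j, F a j)) = true

noncomputable def pairsF (r : ℕ) : Finset (Fin r × Fin r) :=
  Finset.univ.filter (fun q => q.1 < q.2)

noncomputable def famEdges (r n m : ℕ) (F : Fin m → Fin r → Fin n) :
    Finset (Sym2 (MV r n)) :=
  ((Finset.univ : Finset (Fin m)) ×ˢ pairsF r).image
    (fun x => s(((x.2.1, F x.1 x.2.1) : MV r n), (x.2.2, F x.1 x.2.2)))

lemma famEdges_card (r n m : ℕ) (F : Fin m → Fin r → Fin n) (hF : PDfam r n m F) :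
    (famEdges r n m F).card = m * (pairsF r).card := by
  rw [famEdges, Finset.card_image_of_injOn, Finset.card_product, Finset.card_univ,
    Fintype.card_fin]
  rintro ⟨a, i, j⟩ h1 ⟨b, k, l⟩ h2 heq
  simp only [Finset.mem_coe, Finset.mem_product, Finset.mem_univ, true_and, pairsF,
    Finset.mem_filter] at h1 h2
  simp only [Sym2.eq, Sym2.rel_iff', Prod.mk.injEq, Prod.swap_prod_mk] at heq
  rcases heq with ⟨⟨hik, hv1⟩, ⟨hjl, hv2⟩⟩ | ⟨⟨hil, hv1⟩, ⟨hjk, hv2⟩⟩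
  · have hab : a = b := by
      by_contra hab
      exact hF a b hab i (by rw [hv1, hik])
    subst hab; subst hik; subst hjl; rfl
  · exfalso
    have : (i : Fin r) < j := h1
    have : (k : Fin r) < l := h2
    omega

lemma present_mono (r n m : ℕ) (F : Fin m → Fin r → Fin n) :
    {ω | presentFam r n m F ω} ⊆
      {ω : Sym2 (MV r n) → Bool | ∀ e ∈ famEdges r n m F, ω e = true} := by
  intro ω hω e he
  simp only [famEdges, Finset.mem_image, Finset.mem_product, Finset.mem_univ, true_and,
    pairsF, Finset.mem_filter] at he
  obtain ⟨⟨a, i, j⟩, hij, rfl⟩ := he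
  exact hω a i j (ne_of_lt hij)

lemma bad_bound (r n m : ℕ) (hr : 0 < r) (p : ℝ) (h0 : 0 ≤ p) (h1 : p ≤ 1)
    (μ : Measure (Sym2 (MV r n) → Bool))
    (hμ : ∀ E : Finset (Sym2 (MV r n)),
      μ {ω | ∀ e ∈ E, ω e = true} = (ENNReal.ofReal p) ^ E.card) :
    (m.factorial : ENNReal) *
        μ {ω | ∃ F : Fin m → Fin r → Fin n, PDfam r n m F ∧ presentFam r n m F ω}
      ≤ (n : ENNReal) ^ (r * m) * (ENNReal.ofReal p) ^ (m * (pairsF r).card) := by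
  set S : Finset (Fin m → Fin r → Fin n) := Finset.univ.filter (PDfam r n m) with hS
  have step1 : (m.factorial : ENNReal) *
      μ {ω | ∃ F : Fin m → Fin r → Fin n, PDfam r n m F ∧ presentFam r n m F ω}
      ≤ ∑ F ∈ S, μ {ω | presentFam r n m F ω} := by
    apply markov_count μ S (fun F => {ω | presentFam r n m F ω})
    rintro ω ⟨F0, hPD, hpres⟩
    have hinj : Function.Injective F0 := by
      intro a b hab
      by_contra hne
      exact hPD a b hne ⟨0, hr⟩ (by rw [hab])
    calc m.factorial = (Finset.univ : Finset (Equiv.Perm (Fin m))).card := by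
          rw [Finset.card_univ, Fintype.card_perm, Fintype.card_fin]
      _ ≤ (S.filter (fun F => ω ∈ {ω | presentFam r n m F ω})).card := by
          refine Finset.card_le_card_of_injOn (fun σ => F0 ∘ σ) ?_ ?_
          · intro σ _
            simp only [Finset.mem_coe, Finset.mem_filter, hS, Finset.mem_univ, true_and, Set.mem_setOf_eq]
            constructor
            · intro a b hab i; exact hPD (σ a) (σ b) (fun h => hab (σ.injective h)) i
            · intro a i j hij; exact hpres (σ a) i j hij
          · intro σ _ τ _ h
            exact Equiv.ext fun a => hinj (congrFun h a)
  have step2 : ∀ F ∈ S, μ {ω | presentFam r n m F ω}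
      ≤ (ENNReal.ofReal p) ^ (m * (pairsF r).card) := by
    intro F hF
    have hPD : PDfam r n m F := by simpa [hS] using hF
    calc μ {ω | presentFam r n m F ω}
        ≤ μ {ω : Sym2 (MV r n) → Bool | ∀ e ∈ famEdges r n m F, ω e = true} :=
          measure_mono (present_mono r n m F)
      _ = (ENNReal.ofReal p) ^ (famEdges r n m F).card := hμ _
      _ = (ENNReal.ofReal p) ^ (m * (pairsF r).card) := by
          rw [famEdges_card r n m F hPD]
  calc (m.factorial : ENNReal) *
      μ {ω | ∃ F : Fin m → Fin r → Fin n, PDfam r n m F ∧ presentFam r n m F ω}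
      ≤ ∑ F ∈ S, μ {ω | presentFam r n m F ω} := step1
    _ ≤ ∑ _F ∈ S, (ENNReal.ofReal p) ^ (m * (pairsF r).card) := Finset.sum_le_sum step2
    _ = (S.card : ENNReal) * (ENNReal.ofReal p) ^ (m * (pairsF r).card) := by
        rw [Finset.sum_const, nsmul_eq_mul]
    _ ≤ (n : ENNReal) ^ (r * m) * (ENNReal.ofReal p) ^ (m * (pairsF r).card) := by
        apply mul_le_mul_left
        have hcard : S.card ≤ n ^ (r * m) := by
          calc S.card ≤ (Finset.univ : Finset (Fin m → Fin r → Fin n)).card :=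
                Finset.card_filter_le _ _
            _ = n ^ (r * m) := by
                rw [Finset.card_univ, Fintype.card_fun]
                rw [Fintype.card_fun, Fintype.card_fin, Fintype.card_fin, ← pow_mul,
                  Fintype.card_fin]
        calc (S.card : ENNReal) ≤ ((n ^ (r * m) : ℕ) : ENNReal) := Nat.cast_le.2 hcard
          _ = (n : ENNReal) ^ (r * m) := by push_cast; ring

def Gstar (r n a : ℕ) : SimpleGraph (MV r n) where
  Adj u v := u.1 ≠ v.1 ∧ (u.2.val < a ∨ v.2.val < a)
  symm := ⟨fun u v h => ⟨h.1.symm, h.2.symm⟩⟩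
  loopless := ⟨fun u h => h.1 rfl⟩

lemma deterministic (r n a : ℕ) (hr : 0 < r) (ω : Sym2 (MV r n) → Bool)
    (h : HasPerfectKrTiling (Gstar r n a ⊔ sampleGraph r n ω) r) :
    ∃ F : Fin (n - r * a) → Fin r → Fin n,
      PDfam r n (n - r * a) F ∧ presentFam r n (n - r * a) F ω := by
  classical
  obtain ⟨T, ⟨hcards, hdisj⟩, hcover⟩ := h
  set H := Gstar r n a ⊔ sampleGraph r n ω with hH
  have hmult : ∀ u v : MV r n, H.Adj u v → u.1 ≠ v.1 := by
    rintro u v (h' | h') <;> exact And.left h'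
  -- injectivity of fst on tiles
  have hfst : ∀ t ∈ T, Set.InjOn Prod.fst (t : Set (MV r n)) := by
    intro t ht u hu v hv huv
    by_contra hne
    exact hmult u v ((hcards t ht).2 hu hv hne) huv
  -- each tile has exactly one vertex in each class
  have hexu : ∀ t ∈ T, ∀ i : Fin r, ∃! v, v ∈ t ∧ v.1 = i := by
    intro t ht i
    have hcard : (t.image Prod.fst).card = r := by
      rw [Finset.card_image_of_injOn (by exact_mod_cast hfst t ht), (hcards t ht).1]
    have himg : t.image Prod.fst = Finset.univ :=
      Finset.eq_univ_of_card _ (by simp [hcard])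
    have : i ∈ t.image Prod.fst := himg ▸ Finset.mem_univ i
    obtain ⟨v, hv, hvi⟩ := Finset.mem_image.1 this
    refine ⟨v, ⟨hv, hvi⟩, ?_⟩
    rintro u ⟨hu, hui⟩
    exact hfst t ht hu hv (by rw [hui, hvi])
  -- T has exactly n tiles
  have hTcard : T.card = n := by
    have hbu : T.biUnion id = Finset.univ := by
      apply Finset.eq_univ_of_forall
      intro v; obtain ⟨t, ht, hv⟩ := hcover v
      exact Finset.mem_biUnion.2 ⟨t, ht, hv⟩
    have hsum : ∑ t ∈ T, t.card = r * n := by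
      have h2 : (Finset.univ : Finset (MV r n)).card = ∑ t ∈ T, t.card := by
        rw [← hbu]
        exact Finset.card_biUnion (fun x hx y hy hxy => hdisj hx hy hxy)
      simpa [Finset.card_univ] using h2.symm
    have : ∑ t ∈ T, t.card = r * T.card := by
      rw [Finset.sum_congr rfl (fun t ht => (hcards t ht).1), Finset.sum_const, smul_eq_mul,
        mul_comm]
    exact Nat.eq_of_mul_eq_mul_left hr (this.symm.trans hsum)
  -- bad tiles (containing an A-vertex) are few
  set Sbad := T.filter (fun t => ∃ v ∈ t, v.2.val < a) with hSbad
  have hAcard : (Finset.univ.filter (fun v : MV r n => v.2.val < a)).card ≤ r * a := by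
    rcases Nat.eq_zero_or_pos a with h0 | h0
    · simp [h0]
    calc (Finset.univ.filter (fun v : MV r n => v.2.val < a)).card
        ≤ (Finset.univ : Finset (Fin r × Fin a)).card := by
          refine Finset.card_le_card_of_injOn
            (fun v => (v.1, ⟨min v.2.val (a-1), ?_⟩)) (fun v _ => Finset.mem_univ _) ?_
          · omega
          · intro v hv w hw hvw
            simp only [Finset.mem_coe, Finset.mem_filter] at hv hw
            simp only [Prod.mk.injEq, Fin.mk.injEq] at hvw
            have h1 : min v.2.val (a-1) = v.2.val := by omega
            have h2 : min w.2.val (a-1) = w.2.val := by omega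
            ext
            · exact congrArg Fin.val hvw.1
            · rw [h1, h2] at hvw; exact hvw.2
      _ = r * a := by simp [Finset.card_univ]
  have hSbadcard : Sbad.card ≤ r * a := by
    rcases isEmpty_or_nonempty (MV r n) with hE | hN
    · have : Sbad = ∅ := by
        rw [Finset.eq_empty_iff_forall_notMem]
        intro t ht
        rw [hSbad, Finset.mem_filter] at ht
        obtain ⟨v, _, _⟩ := ht.2
        exact hE.false v
      simp [this]
    · have : Inhabited (MV r n) := Classical.inhabited_of_nonempty hN
      refine le_trans (Finset.card_le_card_of_injOn
        (fun t => if h : ∃ v ∈ t, v.2.val < a then h.choose else default) ?_ ?_) hAcard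
      · intro t ht
        rw [hSbad, Finset.mem_coe, Finset.mem_filter] at ht
        dsimp only
        rw [dif_pos ht.2]
        have := ht.2.choose_spec
        simp only [Finset.mem_coe, Finset.mem_filter, Finset.mem_univ, true_and]
        exact this.2
      · intro t ht t' ht' heq
        simp only [Finset.mem_coe] at ht ht'
        rw [hSbad, Finset.mem_filter] at ht ht'
        dsimp only at heq
        rw [dif_pos ht.2, dif_pos ht'.2] at heq
        by_contra hne
        have hv := ht.2.choose_spec.1
        have hv' := ht'.2.choose_spec.1
        rw [heq] at hv
        exact Finset.disjoint_left.1 (hdisj ht.1 ht'.1 hne) hv hv'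
  -- good tiles
  set Sgood := T.filter (fun t => ¬ ∃ v ∈ t, v.2.val < a) with hSgood
  have hSgoodcard : n - r * a ≤ Sgood.card := by
    have h3 := Finset.card_filter_add_card_filter_not
      (s := T) (p := fun t => ∃ v ∈ t, v.2.val < a)
    rw [hTcard, ← hSbad, ← hSgood] at h3
    omega
  -- choose the tiles
  set m := n - r * a with hm
  obtain ⟨S', hS'sub, hS'card⟩ := Finset.exists_subset_card_eq hSgoodcard
  let tEquiv := Finset.equivFinOfCardEq hS'card
  let tile : Fin m → Finset (MV r n) := fun k => (tEquiv.symm k : Finset (MV r n))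
  have htile_mem : ∀ k, tile k ∈ T := by
    intro k
    have := (tEquiv.symm k).2
    have h2 := hS'sub this
    rw [hSgood, Finset.mem_filter] at h2
    exact h2.1
  have htile_good : ∀ k, ∀ v ∈ tile k, ¬ v.2.val < a := by
    intro k v hv
    have := (tEquiv.symm k).2
    have h2 := hS'sub this
    rw [hSgood, Finset.mem_filter] at h2
    exact fun hlt => h2.2 ⟨v, hv, hlt⟩
  have htile_inj : Function.Injective tile := by
    intro k l hkl
    exact tEquiv.symm.injective (Subtype.coe_injective hkl)
  -- define F
  let vert : Fin m → Fin r → MV r n := fun k i =>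
    (tile k).choose (fun v => v.1 = i) (by
      have := hexu (tile k) (htile_mem k) i
      simpa [and_comm] using this)
  have hvert_mem : ∀ k i, vert k i ∈ tile k := fun k i => Finset.choose_mem _ _ _
  have hvert_fst : ∀ k i, (vert k i).1 = i := fun k i =>
    Finset.choose_property (fun v : MV r n => v.1 = i) _ _
  have hvs : ∀ k i, ((i, (vert k i).2) : MV r n) = vert k i := by
    intro k i
    have h1 : (((i, (vert k i).2) : MV r n)).1 = (vert k i).1 := (hvert_fst k i).symm
    have h2 : (((i, (vert k i).2) : MV r n)).2 = (vert k i).2 := rfl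
    exact Prod.ext h1 h2
  refine ⟨fun k i => (vert k i).2, ?_, ?_⟩
  · intro k l hkl i heq
    dsimp only at heq
    have hne : tile k ≠ tile l := fun h => hkl (htile_inj h)
    have hdis := hdisj (htile_mem k) (htile_mem l) hne
    have hveq : vert k i = vert l i := by
      rw [← hvs k i, ← hvs l i, heq]
    exact Finset.disjoint_left.1 hdis (hvert_mem k i) (hveq ▸ hvert_mem l i)
  · intro k i j hij
    dsimp only
    have hu := hvert_mem k i
    have hv := hvert_mem k j
    have hne : vert k i ≠ vert k j := by
      intro h
      exact hij ((hvert_fst k i).symm.trans ((congrArg Prod.fst h).trans (hvert_fst k j)))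
    have hadj : H.Adj (vert k i) (vert k j) := (hcards _ (htile_mem k)).2 hu hv hne
    have heq : s(((i, (vert k i).2) : MV r n), (j, (vert k j).2)) = s(vert k i, vert k j) := by
      rw [hvs, hvs]
    rw [heq]
    rcases hadj with hG | hS
    · exfalso
      rcases And.right hG with h' | h'
      · exact htile_good k _ hu h'
      · exact htile_good k _ hv h'
    · exact And.right hS

lemma gstar_mindeg (r n : ℕ) (α : ℝ) (hα0 : 0 < α) (hα1 : α ≤ 1) :
    MinDegCond r n (Gstar r n ⌈α * n⌉₊) (α * n) := by
  intro v j hj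
  set a := ⌈α * n⌉₊ with ha
  have han : a ≤ n := Nat.ceil_le.2 (by nlinarith [Nat.cast_nonneg (α := ℝ) n])
  by_cases hv : v.2.val < a
  · -- all of class j is adjacent
    have hset : {u : MV r n | u.1 = j ∧ (Gstar r n a).Adj v u} = {u : MV r n | u.1 = j} := by
      ext u
      simp only [Set.mem_setOf_eq, Gstar, and_iff_left_iff_imp]
      intro hu
      exact ⟨fun h => hj (h ▸ hu.symm ▸ rfl), Or.inl hv⟩
    have hco : {u : MV r n | u.1 = j} = ↑(Finset.univ.filter (fun u : MV r n => u.1 = j)) := by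
      simp
    have hcval : (Finset.univ.filter (fun u : MV r n => u.1 = j)).card = n := by
      have : (Finset.univ.filter (fun u : MV r n => u.1 = j)).card
          = (Finset.univ : Finset (Fin n)).card := by
        refine Finset.card_nbij' (fun u => u.2) (fun x => (j, x)) ?_ ?_ ?_ ?_
        · intro u _; exact Finset.mem_univ _
        · intro x _; simp
        · intro u hu
          simp only [Finset.mem_coe, Finset.mem_filter] at hu
          exact Prod.ext hu.2.symm rfl
        · intro x _; rfl
      rw [this, Finset.card_univ, Fintype.card_fin]
    rw [degIn, hset, hco, Set.ncard_coe_finset, hcval]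
    nlinarith [Nat.cast_nonneg (α := ℝ) n]
  · have hset : {u : MV r n | u.1 = j ∧ (Gstar r n a).Adj v u}
        = {u : MV r n | u.1 = j ∧ u.2.val < a} := by
      ext u
      simp only [Set.mem_setOf_eq, Gstar]
      constructor
      · rintro ⟨h1, _, (h2 | h2)⟩
        · exact absurd h2 hv
        · exact ⟨h1, h2⟩
      · rintro ⟨h1, h2⟩
        exact ⟨h1, fun h => hj (h ▸ h1.symm ▸ rfl), Or.inr h2⟩
    have hco : {u : MV r n | u.1 = j ∧ u.2.val < a}
        = ↑(Finset.univ.filter (fun u : MV r n => u.1 = j ∧ u.2.val < a)) := by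
      simp
    rcases Nat.eq_zero_or_pos n with hn0 | hn0
    · rw [degIn]
      simp only [hn0, Nat.cast_zero, mul_zero]
      exact Nat.cast_nonneg _
    have hcval : a ≤ (Finset.univ.filter (fun u : MV r n => u.1 = j ∧ u.2.val < a)).card := by
      have hb : (Finset.range a).card ≤
          (Finset.univ.filter (fun u : MV r n => u.1 = j ∧ u.2.val < a)).card := by
        refine Finset.card_le_card_of_injOn
          (fun x => ((j, ⟨min x (n-1), by omega⟩) : MV r n)) ?_ ?_
        · intro x hx
          have hxa := Finset.mem_range.1 hx
          simp only [Finset.mem_coe, Finset.mem_filter, Finset.mem_univ, true_and]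
          show min x (n-1) < a
          omega
        · intro x hx y hy hxy
          have hxa := Finset.mem_range.1 hx
          have hya := Finset.mem_range.1 hy
          have := congrArg (fun q : MV r n => (q.2 : ℕ)) hxy
          simp only at this
          omega
      simpa using hb

    rw [degIn, hset, hco, Set.ncard_coe_finset]
    calc α * n ≤ (a : ℝ) := Nat.le_ceil _
      _ ≤ _ := Nat.cast_le.2 hcval

lemma pow_div_fact (m : ℕ) : ((m : ℝ)/3)^m ≤ m.factorial := by
  have h1 : ((m:ℝ))^m / m.factorial ≤ Real.exp m := by
    have := Real.sum_le_exp_of_nonneg (x := (m:ℝ)) (Nat.cast_nonneg m) (m+1)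
    refine le_trans ?_ this
    have : ((m:ℝ))^m / m.factorial = ∑ i ∈ Finset.range (m+1), if i = m then ((m:ℝ))^i / i.factorial else 0 := by
      rw [Finset.sum_ite_eq' (Finset.range (m+1)) m]
      simp
    rw [this]
    apply Finset.sum_le_sum
    intro i _
    split
    · exact le_refl _
    · positivity
  have h2 : Real.exp (m:ℝ) ≤ 3^m := by
    calc Real.exp (m:ℝ) = (Real.exp 1)^m := by rw [← Real.exp_nat_mul]; norm_num
      _ ≤ 3^m := pow_le_pow_left₀ (Real.exp_pos 1).le
          (le_of_lt (lt_trans Real.exp_one_lt_d9 (by norm_num))) m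
  have hfac : (0:ℝ) < m.factorial := by positivity
  rw [div_pow, div_le_iff₀ (by positivity)]
  rw [div_le_iff₀ hfac] at h1
  calc (m:ℝ)^m ≤ Real.exp m * m.factorial := h1
    _ ≤ 3^m * m.factorial := by nlinarith [hfac]
    _ = m.factorial * 3^m := mul_comm _ _


end Aux

set_option maxHeartbeats 1000000 in
theorem statement1 (r : ℕ) (hr : 3 ≤ r) (α : ℝ) (hα0 : 0 < α) (hα1 : α < 1 / r) :
    ∃ c : ℝ, 0 < c ∧
      ∃ G : (n : ℕ) → SimpleGraph (MV r n),
        (∀ n, IsMultipartite r n (G n)) ∧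
        (∀ n, MinDegCond r n (G n) (α * n)) ∧
        ∀ p : ℕ → ℝ, (∀ n, 0 ≤ p n) → (∀ n, p n ≤ 1) →
          (∀ n : ℕ, p n ≤ c * (n : ℝ) ^ (-(2 : ℝ) / r)) →
          Tendsto (fun n => grpMeasure r n (p n)
              {ω | ¬ HasPerfectKrTiling ((G n) ⊔ sampleGraph r n ω) r})
            atTop (nhds 1) := by
  classical
  have hr0 : 0 < r := by omega
  have hrR : (1:ℝ) ≤ r := by exact_mod_cast Nat.one_le_iff_ne_zero.2 (by omega)
  set γ : ℝ := 1 - r * α with hγdef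
  have hγ : 0 < γ := by
    have : α * r < (1/r) * r := by
      apply mul_lt_mul_of_pos_right hα1
      positivity
    rw [one_div, inv_mul_cancel₀ (by positivity)] at this
    simp only [hγdef]
    nlinarith
  have hα1' : α ≤ 1 := by
    have h1r : (1:ℝ)/r ≤ 1 := by
      rw [div_le_one (by positivity)]; exact hrR
    linarith
  set c : ℝ := min (γ/12) (1/2) with hcdef
  have hc0 : 0 < c := lt_min (by positivity) (by norm_num)
  have hc12 : c ≤ 1/2 := min_le_right _ _
  have hcγ : c ≤ γ/12 := min_le_left _ _
  refine ⟨c, hc0, fun n => Gstar r n ⌈α * n⌉₊, ?_, ?_, ?_⟩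
  · intro n u v h; exact And.left h
  · intro n; exact gstar_mindeg r n α hα0 hα1'
  intro p hp0 hp1 hpc
  -- notation
  set a : ℕ → ℕ := fun n => ⌈α * n⌉₊ with hadef
  set m : ℕ → ℕ := fun n => n - r * a n with hmdef
  set P : ℕ := (pairsF r).card with hPdef
  have hP2 : 2 * P = r * (r - 1) := two_pairs r
  have hP1 : 1 ≤ P := by
    have : ((⟨0, by omega⟩ : Fin r), (⟨1, by omega⟩ : Fin r)) ∈ pairsF r :=
      Finset.mem_filter.2 ⟨Finset.mem_univ _, Fin.mk_lt_mk.2 (by omega)⟩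
    exact Finset.card_pos.2 ⟨_, this⟩ 
  set Bad : (n : ℕ) → Set (Sym2 (MV r n) → Bool) := fun n =>
    {ω | ∃ F : Fin (m n) → Fin r → Fin n, PDfam r n (m n) F ∧ presentFam r n (m n) F ω}
    with hBaddef
  -- the tiling event is contained in the Bad event
  have hdet : ∀ n, {ω : Sym2 (MV r n) → Bool |
      HasPerfectKrTiling ((Gstar r n (a n)) ⊔ sampleGraph r n ω) r} ⊆ Bad n := by
    intro n ω hω
    exact deterministic r n (a n) hr0 ω hω
  -- lower bound on m
  have hm_lb : ∀ n : ℕ, γ * n - r ≤ (m n : ℝ) := by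
    intro n
    have ha_ub : (a n : ℝ) ≤ α * n + 1 :=
      le_of_lt (Nat.ceil_lt_add_one (by positivity))
    have h1 : (n:ℝ) - r * (a n) ≤ (m n : ℝ) := by
      rcases le_or_gt (r * a n) n with h | h
      · rw [hmdef]
        push_cast [Nat.cast_sub h]
        ring_nf
        exact le_refl _
      · have : (m n : ℝ) = 0 := by
          rw [hmdef]; simp only
          rw [Nat.sub_eq_zero_of_le (le_of_lt h)]
          simp
        rw [this]
        have : (n:ℝ) < r * a n := by exact_mod_cast h
        linarith
    have h2 : γ * n - r ≤ (n:ℝ) - r * (a n) := by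
      have : (r:ℝ) * a n ≤ r * (α * n + 1) := by
        apply mul_le_mul_of_nonneg_left ha_ub (by positivity)
      simp only [hγdef]
      nlinarith
    linarith
  have hm_tendsto : Tendsto (fun n => (m n : ℝ)) atTop atTop := by
    apply tendsto_atTop_mono hm_lb
    apply Filter.tendsto_atTop_add_const_right
    exact (tendsto_natCast_atTop_atTop (R := ℝ)).const_mul_atTop hγ
  have hmN_tendsto : Tendsto m atTop atTop := by
    rw [← tendsto_natCast_atTop_iff (R := ℝ)]
    exact hm_tendsto
  -- the key eventual bound
  have hkey : ∀ᶠ n : ℕ in atTop,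
      grpMeasure r n (p n) (Bad n) ≤ ENNReal.ofReal ((1/2 : ℝ) ^ (m n)) := by
    have hev1 : ∀ᶠ n : ℕ in atTop, (1:ℝ) ≤ n :=
      tendsto_natCast_atTop_atTop.eventually_ge_atTop 1
    have hev2 : ∀ᶠ n : ℕ in atTop, (r:ℝ) ≤ γ * n / 2 := by
      have : Tendsto (fun n : ℕ => γ * n / 2) atTop atTop := by
        apply Tendsto.atTop_div_const (by norm_num)
        exact (tendsto_natCast_atTop_atTop (R := ℝ)).const_mul_atTop hγ
      exact this.eventually_ge_atTop _
    filter_upwards [hev1, hev2] with n hn1 hn2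
    set q : ENNReal := ENNReal.ofReal (p n) with hqdef
    have hμuniv : grpMeasure r n (p n) Set.univ = 1 := grp_univ r n (p n) (hp0 n) (hp1 n)
    have hnpos : (0:ℝ) < n := by linarith
    have hm2 : γ * n / 2 ≤ (m n : ℝ) := by
      have h5 := hm_lb n
      nlinarith [h5, hn2]
    -- step 1 : factorial Markov bound
    have h1 : ((m n).factorial : ENNReal) * grpMeasure r n (p n) (Bad n)
        ≤ (n : ENNReal) ^ (r * m n) * q ^ (m n * P) := by
      exact bad_bound r n (m n) hr0 (p n) (hp0 n) (hp1 n) _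
        (fun E => grp_forall_true r n (p n) (hp0 n) (hp1 n) E)
    -- step 2 : pass to reals
    have hcn : (0:ℝ) ≤ c * (n:ℝ) ^ (-(2:ℝ)/r) := by positivity
    have h2 : (n : ENNReal) ^ (r * m n) * q ^ (m n * P)
        ≤ ENNReal.ofReal ((n:ℝ) ^ (r * m n) * (c * (n:ℝ) ^ (-(2:ℝ)/r)) ^ (m n * P)) := by
      rw [ENNReal.ofReal_mul (by positivity)]
      apply mul_le_mul'
      · rw [ENNReal.ofReal_pow (by positivity), ENNReal.ofReal_natCast]
      · rw [ENNReal.ofReal_pow hcn]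
        exact pow_le_pow_left' (ENNReal.ofReal_le_ofReal (hpc n)) _
    -- step 3 : the real-number estimate
    have h3 : (n:ℝ) ^ (r * m n) * (c * (n:ℝ) ^ (-(2:ℝ)/r)) ^ (m n * P)
        ≤ (1/2 : ℝ) ^ (m n) * (m n).factorial := by
      have hx0 : (0:ℝ) < (n:ℝ) := hnpos
      -- rewrite the rpow part
      have hA : ((n:ℝ) ^ (-(2:ℝ)/r)) ^ (m n * P) = (n:ℝ) ^ (-((m n : ℝ) * ((r:ℝ) - 1))) := by
        rw [← Real.rpow_natCast ((n:ℝ) ^ (-(2:ℝ)/r)) (m n * P), ← Real.rpow_mul hx0.le]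
        congr 1
        have h2P : (2:ℝ) * (P:ℝ) = (r:ℝ) * ((r:ℝ) - 1) := by
          have h := congrArg (Nat.cast : ℕ → ℝ) hP2
          push_cast [Nat.cast_sub (by omega : 1 ≤ r)] at h
          linarith
        have hrne : (r:ℝ) ≠ 0 := by positivity
        push_cast
        field_simp
        linear_combination (-(m n : ℝ)) * h2P
      have hB : (n:ℝ) ^ (r * m n) * (n:ℝ) ^ (-((m n : ℝ) * ((r:ℝ) - 1))) = (n:ℝ) ^ (m n) := by
        rw [← Real.rpow_natCast (n:ℝ) (r * m n), ← Real.rpow_natCast (n:ℝ) (m n),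
          ← Real.rpow_add hx0]
        congr 1
        push_cast
        ring
      calc (n:ℝ) ^ (r * m n) * (c * (n:ℝ) ^ (-(2:ℝ)/r)) ^ (m n * P)
          = c ^ (m n * P) * ((n:ℝ) ^ (r * m n) * ((n:ℝ) ^ (-(2:ℝ)/r)) ^ (m n * P)) := by
            rw [mul_pow]; ring
        _ = c ^ (m n * P) * (n:ℝ) ^ (m n) := by rw [hA, hB]
        _ ≤ c ^ (m n) * (n:ℝ) ^ (m n) := by
            apply mul_le_mul_of_nonneg_right _ (by positivity)
            apply pow_le_pow_of_le_one hc0.le (by linarith)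
            exact Nat.le_mul_of_pos_right _ (by omega)
        _ = (c * (n:ℝ)) ^ (m n) := by rw [mul_pow]
        _ ≤ ((m n : ℝ) / 6) ^ (m n) := by
            apply pow_le_pow_left₀ (by positivity)
            have hn_le : (n:ℝ) ≤ 2 * (m n) / γ := by
              rw [le_div_iff₀ hγ]
              nlinarith [hm2]
            calc c * (n:ℝ) ≤ (γ/12) * (2 * (m n) / γ) := by
                  apply mul_le_mul hcγ hn_le (by positivity) (by positivity)
              _ = (m n : ℝ) / 6 := by field_simp; ring
        _ = (1/2 : ℝ) ^ (m n) * ((m n : ℝ)/3) ^ (m n) := by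
            rw [← mul_pow]; congr 1; ring
        _ ≤ (1/2 : ℝ) ^ (m n) * (m n).factorial := by
            apply mul_le_mul_of_nonneg_left (pow_div_fact (m n)) (by positivity)
    -- combine
    have h4 : ((m n).factorial : ENNReal) * grpMeasure r n (p n) (Bad n)
        ≤ ENNReal.ofReal ((1/2 : ℝ) ^ (m n)) * ((m n).factorial : ENNReal) := by
      calc ((m n).factorial : ENNReal) * grpMeasure r n (p n) (Bad n)
          ≤ ENNReal.ofReal ((n:ℝ) ^ (r * m n) * (c * (n:ℝ) ^ (-(2:ℝ)/r)) ^ (m n * P)) :=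
            le_trans h1 h2
        _ ≤ ENNReal.ofReal ((1/2 : ℝ) ^ (m n) * (m n).factorial) := ENNReal.ofReal_le_ofReal h3
        _ = ENNReal.ofReal ((1/2 : ℝ) ^ (m n)) * ((m n).factorial : ENNReal) := by
            rw [ENNReal.ofReal_mul (by positivity), ENNReal.ofReal_natCast]
    rw [mul_comm] at h4
    have hfne : ((m n).factorial : ENNReal) ≠ 0 := by
      exact_mod_cast Nat.cast_ne_zero.2 (m n).factorial_pos.ne'
    have hfnt : ((m n).factorial : ENNReal) ≠ ⊤ := ENNReal.natCast_ne_top _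
    exact (ENNReal.mul_le_mul_iff_left hfne hfnt).1 h4
  -- Bad probability tends to zero
  have hBad0 : Tendsto (fun n => grpMeasure r n (p n) (Bad n)) atTop (nhds 0) := by
    have hb : Tendsto (fun n : ℕ => ENNReal.ofReal ((1/2 : ℝ) ^ (m n))) atTop (nhds 0) := by
      have : Tendsto (fun n : ℕ => (1/2 : ℝ) ^ (m n)) atTop (nhds 0) := by
        exact (tendsto_pow_atTop_nhds_zero_of_lt_one (by norm_num) (by norm_num)).comp
          hmN_tendsto
      have := (ENNReal.continuous_ofReal.tendsto 0).comp this
      rwa [ENNReal.ofReal_zero] at this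
    apply tendsto_of_tendsto_of_tendsto_of_le_of_le' tendsto_const_nhds hb
    · filter_upwards with n using bot_le
    · exact hkey
  -- final squeeze
  have hup : ∀ n : ℕ, grpMeasure r n (p n)
      {ω | ¬ HasPerfectKrTiling ((Gstar r n (a n)) ⊔ sampleGraph r n ω) r} ≤ 1 := by
    intro n
    calc grpMeasure r n (p n) _ ≤ grpMeasure r n (p n) Set.univ := measure_mono (Set.subset_univ _)
      _ = 1 := grp_univ r n (p n) (hp0 n) (hp1 n)
  have hlow : ∀ n : ℕ, 1 - grpMeasure r n (p n) (Bad n) ≤ grpMeasure r n (p n)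
      {ω | ¬ HasPerfectKrTiling ((Gstar r n (a n)) ⊔ sampleGraph r n ω) r} := by
    intro n
    have hsub : (Bad n)ᶜ ⊆
        {ω | ¬ HasPerfectKrTiling ((Gstar r n (a n)) ⊔ sampleGraph r n ω) r} := by
      intro ω hω hcon
      exact hω (hdet n hcon)
    have hne : grpMeasure r n (p n) (Bad n) ≠ ⊤ := by
      apply ne_of_lt
      calc grpMeasure r n (p n) (Bad n) ≤ grpMeasure r n (p n) Set.univ :=
            measure_mono (Set.subset_univ _)
        _ = 1 := grp_univ r n (p n) (hp0 n) (hp1 n)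
        _ < ⊤ := ENNReal.one_lt_top
    calc 1 - grpMeasure r n (p n) (Bad n)
        = grpMeasure r n (p n) Set.univ - grpMeasure r n (p n) (Bad n) := by
          rw [grp_univ r n (p n) (hp0 n) (hp1 n)]
      _ = grpMeasure r n (p n) (Bad n)ᶜ := (measure_compl (allMeasurable _) hne).symm
      _ ≤ _ := measure_mono hsub
  have hlow_tendsto : Tendsto (fun n : ℕ => 1 - grpMeasure r n (p n) (Bad n)) atTop (nhds 1) := by
    have := ENNReal.Tendsto.sub (tendsto_const_nhds (x := (1 : ENNReal)) (f := atTop))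
      hBad0 (Or.inl ENNReal.one_ne_top)
    simpa using this
  exact tendsto_of_tendsto_of_tendsto_of_le_of_le hlow_tendsto tendsto_const_nhds hlow hup
end

section
/- Let r ≥ 3 and let ε, d > 0 with ε ≤ (d/2)^{r−2}. Let G be a balanced r-partite graph on V_1 ⊔ ⋯ ⊔ V_r with |V_i| = n for all i, such that (V_1, V_i) is (ε, d)-super-regular for all i ∈ {2, …, r}. Let F = F_{V_1}[V_2, …, V_r] be the (r−1)-uniform (r−1)-partite hypergraph on vertex classes V_2, …, V_r in which a tuple (v_2, …, v_r) ∈ V_2 × ⋯ × V_r is an edge iff v_2, …, v_r have at least (d/2)^{r−1}·|V_1| common neighbors in V_1. Then the minimum degree of F (the minimum, over vertices v, of the number of edges of F containing v) is at least (1 − (r−2)ε)·n^{r−2}. -/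
open MeasureTheory Filter Finset
open scoped Classical

/-! ### Auxiliary machinery for statement10 -/

abbrev Kt (r : ℕ) := {k : Fin r // k.val ≠ 0}

lemma ncard_setOf' {α : Type*} [Fintype α] (p : α → Prop) [DecidablePred p] :
    {x | p x}.ncard = (Finset.univ.filter p).card := by
  have h1 : {x | p x}.ncard = {x | p x}.toFinset.card := Set.ncard_eq_toFinset_card' _
  rw [h1, Set.toFinset_setOf]

lemma card_filter_fst (r n : ℕ) (i : Fin r) :
    (Finset.univ.filter (fun u : MV r n => u.1 = i)).card = n := by
  have h : (Finset.univ.filter (fun u : MV r n => u.1 = i))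
      = {i} ×ˢ (Finset.univ : Finset (Fin n)) := by
    ext u
    simp only [Finset.mem_filter, Finset.mem_univ, true_and, Finset.mem_product,
      Finset.mem_singleton, and_true]
  rw [h, Finset.card_product, Finset.card_singleton, Finset.card_univ, Fintype.card_fin, one_mul]

lemma card_classFinset (r n : ℕ) (i : Fin r) : (classFinset r n i.val).card = n := by
  have h : classFinset r n i.val = Finset.univ.filter (fun u : MV r n => u.1 = i) := by
    ext u
    simp [classFinset, Fin.val_eq_val]
  rw [h, card_filter_fst]

lemma card_Kt (r : ℕ) (hr : 1 ≤ r) : Fintype.card (Kt r) = r - 1 := by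
  have h1 : Fintype.card {k : Fin r // k.val = 0} = 1 :=
    Fintype.card_eq_one_iff.mpr ⟨⟨⟨0, hr⟩, rfl⟩, fun b => Subtype.ext (Fin.ext b.2)⟩
  have h2 := Fintype.card_subtype_compl (fun k : Fin r => k.val = 0)
  simp only [h1, Fintype.card_fin] at h2
  convert h2 using 2

/-- common neighbourhood in class 0 of the vertices `h k`, `k ∈ S` -/
noncomputable def cnb (r n : ℕ) (G : SimpleGraph (MV r n)) (S : Finset (Kt r))
    (h : Kt r → MV r n) : Finset (MV r n) :=
  Finset.univ.filter (fun u => u.1.val = 0 ∧ ∀ k ∈ S, G.Adj u (h k))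

lemma cnb_subset (r n : ℕ) (G : SimpleGraph (MV r n)) (S : Finset (Kt r))
    (h : Kt r → MV r n) : cnb r n G S h ⊆ classFinset r n 0 := by
  intro u hu
  simp only [cnb, Finset.mem_filter, Finset.mem_univ, true_and] at hu
  simp only [classFinset, Finset.mem_filter, Finset.mem_univ, true_and]
  exact hu.1

lemma cnb_congr (r n : ℕ) (G : SimpleGraph (MV r n)) (S : Finset (Kt r))
    (h h' : Kt r → MV r n) (hhh : ∀ k ∈ S, h k = h' k) :
    cnb r n G S h = cnb r n G S h' := by
  ext u
  simp only [cnb, Finset.mem_filter, Finset.mem_univ, true_and]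
  refine and_congr_right fun _ => ⟨fun ha k hk => ?_, fun ha k hk => ?_⟩
  · rw [← hhh k hk]; exact ha k hk
  · rw [hhh k hk]; exact ha k hk

lemma cnb_insert (r n : ℕ) (G : SimpleGraph (MV r n)) (k : Kt r) (S : Finset (Kt r))
    (h : Kt r → MV r n) :
    cnb r n G (insert k S) h = (cnb r n G S h).filter (fun u => G.Adj u (h k)) := by
  ext u
  simp only [cnb, Finset.mem_filter, Finset.mem_univ, true_and, Finset.mem_insert]
  constructor
  · rintro ⟨h0, hall⟩
    exact ⟨⟨h0, fun k' hk' => hall k' (Or.inr hk')⟩, hall k (Or.inl rfl)⟩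
  · rintro ⟨⟨h0, hall⟩, hadj⟩
    refine ⟨h0, fun k' hk' => hk'.elim (fun e => e ▸ hadj) (hall k')⟩

/-- per-coordinate constraint sets -/
noncomputable def Tf (r n : ℕ) (v : MV r n) (j0 : Kt r) (k : Kt r) : Finset (MV r n) :=
  if k = j0 then {v} else Finset.univ.filter (fun u => u.1 = k.1)

lemma mem_Tf_fst (r n : ℕ) (v : MV r n) (j0 k : Kt r) (x : MV r n)
    (hmem : x ∈ Tf r n v j0 k) (hj0 : v.1 = j0.1) : x.1 = k.1 := by
  by_cases h : k = j0
  · subst h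
    simp only [Tf, if_pos] at hmem
    rw [Finset.mem_singleton] at hmem
    rw [hmem, hj0]
  · simp only [Tf, if_neg h, Finset.mem_filter, Finset.mem_univ, true_and] at hmem
    exact hmem

noncomputable def AA (r n : ℕ) (G : SimpleGraph (MV r n)) (d : ℝ) (v : MV r n)
    (j0 : Kt r) (S : Finset (Kt r)) : Finset (Kt r → MV r n) :=
  (Fintype.piFinset (Tf r n v j0)).filter
    (fun h => (d/2)^(S.card+1) * n ≤ ((cnb r n G (insert j0 S) h).card : ℝ))

lemma mem_AA {r n : ℕ} {G : SimpleGraph (MV r n)} {d : ℝ} {v : MV r n} {j0 : Kt r}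
    {S : Finset (Kt r)} {h : Kt r → MV r n} :
    h ∈ AA r n G d v j0 S ↔ (∀ k, h k ∈ Tf r n v j0 k) ∧
      (d/2)^(S.card+1) * n ≤ ((cnb r n G (insert j0 S) h).card : ℝ) := by
  rw [AA, Finset.mem_filter, Fintype.mem_piFinset]

lemma card_piFinset_one (r n : ℕ) (hr : 3 ≤ r) (j0 : Kt r) (T : Kt r → Finset (MV r n))
    (hj : (T j0).card = 1) (hrest : ∀ k', k' ≠ j0 → (T k').card = n) :
    (Fintype.piFinset T).card = n ^ (r - 2) := by
  rw [Fintype.card_piFinset,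
    ← Finset.mul_prod_erase Finset.univ _ (Finset.mem_univ j0), hj, one_mul,
    Finset.prod_congr rfl (fun k' hk' => hrest k' (Finset.ne_of_mem_erase hk')),
    Finset.prod_const, Finset.card_erase_of_mem (Finset.mem_univ j0), Finset.card_univ,
    card_Kt r (by omega)]
  all_goals (first | rfl | (congr 1; omega))

lemma card_piFinset_two (r n : ℕ) (hr : 3 ≤ r) (j0 k : Kt r) (hne : k ≠ j0)
    (T : Kt r → Finset (MV r n))
    (hj : (T j0).card = 1) (hk : (T k).card = 1)
    (hrest : ∀ k', k' ≠ j0 → k' ≠ k → (T k').card = n) :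
    (Fintype.piFinset T).card = n ^ (r - 3) := by
  have hkmem : k ∈ Finset.univ.erase j0 := Finset.mem_erase.mpr ⟨hne, Finset.mem_univ k⟩
  rw [Fintype.card_piFinset,
    ← Finset.mul_prod_erase Finset.univ _ (Finset.mem_univ j0), hj, one_mul,
    ← Finset.mul_prod_erase _ _ hkmem, hk, one_mul]
  rw [Finset.prod_congr rfl (fun k' hk' => hrest k'
      (Finset.ne_of_mem_erase (Finset.mem_of_mem_erase hk')) (Finset.ne_of_mem_erase hk')),
    Finset.prod_const, Finset.card_erase_of_mem hkmem,
    Finset.card_erase_of_mem (Finset.mem_univ j0), Finset.card_univ, card_Kt r (by omega)]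
  all_goals (first | rfl | (congr 1; omega))

lemma relDensity_le {A B : Type*} [Fintype A] [Fintype B] (R : A → B → Prop)
    (s : Finset A) (t : Finset B) (c : ℝ) (hc : 0 ≤ c)
    (hb : ∀ b ∈ t, ((s.filter (fun a => R a b)).card : ℝ) ≤ c * s.card) :
    relDensity R s t ≤ c := by
  have hmaps : ∀ p ∈ Finset.univ.filter (fun p : A × B => p.1 ∈ s ∧ p.2 ∈ t ∧ R p.1 p.2),
      p.2 ∈ t := by
    intro p hp
    simp only [Finset.mem_filter] at hp
    exact hp.2.2.1
  have hsum := Finset.card_eq_sum_card_fiberwise hmaps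
  have hfib : ∀ b ∈ t,
      (((Finset.univ.filter (fun p : A × B => p.1 ∈ s ∧ p.2 ∈ t ∧ R p.1 p.2)).filter
        (fun p => p.2 = b)).card : ℝ) ≤ c * s.card := by
    intro b hbt
    refine le_trans ?_ (hb b hbt)
    have hle : ((Finset.univ.filter (fun p : A × B => p.1 ∈ s ∧ p.2 ∈ t ∧ R p.1 p.2)).filter
        (fun p => p.2 = b)).card ≤ (s.filter (fun a => R a b)).card := by
      apply Finset.card_le_card_of_injOn (fun p => p.1)
      · intro p hp
        simp only [Finset.mem_coe, Finset.mem_filter, Finset.mem_univ, true_and] at hp ⊢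
        obtain ⟨⟨h1, _, h3⟩, h4⟩ := hp
        exact ⟨h1, h4 ▸ h3⟩
      · intro p hp q hq hpq
        simp only [Finset.coe_filter, Set.mem_setOf_eq] at hp hq
        exact Prod.ext hpq (hp.2.trans hq.2.symm)
    exact_mod_cast hle
  have hPle : (((Finset.univ.filter
      (fun p : A × B => p.1 ∈ s ∧ p.2 ∈ t ∧ R p.1 p.2)).card : ℝ))
      ≤ t.card * (c * s.card) := by
    rw [hsum]
    push_cast
    refine le_trans (Finset.sum_le_sum hfib) ?_
    rw [Finset.sum_const, nsmul_eq_mul]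
  rw [relDensity, ncard_setOf']
  rcases eq_or_lt_of_le (mul_nonneg (Nat.cast_nonneg s.card) (Nat.cast_nonneg t.card)
      : (0:ℝ) ≤ (s.card : ℝ) * t.card) with h0 | h0
  · rw [← h0, div_zero]; exact hc
  · rw [div_le_iff₀ h0]
    refine le_trans hPle (le_of_eq (by ring))

lemma bad_small (r n : ℕ) (hr : 0 < r) (hn : 0 < n) (ε d : ℝ) (hε : 0 < ε) (hd : 0 < d)
    (G : SimpleGraph (MV r n)) (i : Fin r)
    (hsr1 : ∀ X ⊆ classFinset r n 0, ∀ Y ⊆ classFinset r n i.val,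
      ε * (classFinset r n 0).card ≤ X.card → ε * (classFinset r n i.val).card ≤ Y.card →
      d < relDensity G.Adj X Y)
    (X : Finset (MV r n)) (hXsub : X ⊆ classFinset r n 0) (hXc : ε * n ≤ X.card)
    (c : ℝ) (hc : c ≤ (d/2) * X.card) :
    (((classFinset r n i.val).filter
      (fun y => ((X.filter (fun u => G.Adj u y)).card : ℝ) < c)).card : ℝ) < ε * n := by
  by_contra hcon
  push_neg at hcon
  set Bad := (classFinset r n i.val).filter
      (fun y => ((X.filter (fun u => G.Adj u y)).card : ℝ) < c) with hBad
  have hc0 : (classFinset r n 0).card = n := card_classFinset r n ⟨0, by omega⟩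
  have hci : (classFinset r n i.val).card = n := card_classFinset r n i
  have hdlt := hsr1 X hXsub Bad (Finset.filter_subset _ _)
    (by rw [hc0]; exact hXc) (by rw [hci]; exact hcon)
  have hle : relDensity G.Adj X Bad ≤ d/2 := by
    apply relDensity_le _ _ _ _ (by linarith)
    intro b hbB
    rw [hBad, Finset.mem_filter] at hbB
    exact le_trans (le_of_lt hbB.2) hc
  linarith

lemma step_lemma (r n : ℕ) (hr : 3 ≤ r) (hn : 0 < n) (ε d : ℝ) (hε : 0 < ε) (hd : 0 < d)
    (hd2 : d ≤ 2) (hεd : ε ≤ (d/2)^(r-2)) (G : SimpleGraph (MV r n))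
    (hsr : ∀ i : Fin r, i.val ≠ 0 →
      IsSuperRegularR G.Adj ε d (classFinset r n 0) (classFinset r n i.val))
    (v : MV r n) (j0 : Kt r)
    (S : Finset (Kt r)) (k : Kt r) (hkS : k ∉ S) (hkj : k ≠ j0) (hjS : j0 ∉ S)
    (hcard : S.card + 1 ≤ r - 2) :
    ((AA r n G d v j0 S).card : ℝ) - ε * (n:ℝ)^(r-2)
      ≤ ((AA r n G d v j0 (insert k S)).card : ℝ) := by
  classical
  have hd2' : (0:ℝ) ≤ d/2 := by linarith
  have hd2'' : d/2 ≤ 1 := by linarith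
  set y0 : MV r n := (k.1, ⟨0, hn⟩) with hy0
  set φ : (Kt r → MV r n) → (Kt r → MV r n) := fun h => Function.update h k y0 with hφ
  set B := (AA r n G d v j0 S).filter
    (fun h => ((cnb r n G (insert j0 (insert k S)) h).card : ℝ) < (d/2)^(S.card+1+1) * n)
    with hB
  have hsub1 : AA r n G d v j0 S \ B ⊆ AA r n G d v j0 (insert k S) := by
    intro h hh
    rw [Finset.mem_sdiff] at hh
    obtain ⟨hA, hnB⟩ := hh
    have hcond : ¬ (((cnb r n G (insert j0 (insert k S)) h).card : ℝ)
        < (d/2)^(S.card+1+1) * n) := fun hlt => hnB (Finset.mem_filter.mpr ⟨hA, hlt⟩)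
    push_neg at hcond
    rw [mem_AA] at hA ⊢
    refine ⟨hA.1, ?_⟩
    rw [Finset.card_insert_of_notMem hkS]
    exact hcond
  have hBbound : (B.card : ℝ) ≤ ε * (n:ℝ)^(r-2) := by
    set t := B.image φ with ht
    have hmapsto : ∀ h ∈ B, φ h ∈ t := fun h hh => Finset.mem_image_of_mem φ hh
    have hsum := Finset.card_eq_sum_card_fiberwise hmapsto
    have hfib : ∀ a ∈ t, ((B.filter (fun h => φ h = a)).card : ℝ) ≤ ε * n := by
      intro a ha
      obtain ⟨h0, hh0B, hh0a⟩ := Finset.mem_image.mp ha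
      set N := cnb r n G (insert j0 S) h0 with hN
      have hh0A : h0 ∈ AA r n G d v j0 S := (Finset.mem_filter.mp hh0B).1
      have hNc : (d/2)^(S.card+1) * n ≤ (N.card : ℝ) := (mem_AA.mp hh0A).2
      have hεN : ε * n ≤ (N.card : ℝ) := by
        have h1 : (d/2)^(r-2) ≤ (d/2)^(S.card+1) :=
          pow_le_pow_of_le_one hd2' hd2'' (by omega)
        nlinarith [Nat.cast_nonneg (α := ℝ) n]
      set Bad := (classFinset r n k.1.val).filter
        (fun y => ((N.filter (fun u => G.Adj u y)).card : ℝ) < (d/2)^(S.card+1+1) * n)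
        with hBad
      have hBadlt : ((Bad.card : ℝ)) < ε * n := by
        refine bad_small r n (by omega) hn ε d hε hd G k.1 (hsr k.1 k.2).1 N
          (cnb_subset r n G _ h0) hεN _ ?_
        have he : (d/2)^(S.card+1+1) * (n:ℝ) = (d/2) * ((d/2)^(S.card+1) * n) := by ring
        rw [he]
        exact mul_le_mul_of_nonneg_left hNc hd2'
      refine le_trans ?_ (le_of_lt hBadlt)
      have hcardle : (B.filter (fun h => φ h = a)).card ≤ Bad.card := by
        apply Finset.card_le_card_of_injOn (fun h => h k)
        · intro h hh
          rw [Finset.mem_coe, Finset.mem_filter] at hh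
          obtain ⟨hhB, hha⟩ := hh
          rw [hB, Finset.mem_filter] at hhB
          obtain ⟨hhA, hhcond⟩ := hhB
          have hagree : ∀ k' ∈ insert j0 S, h k' = h0 k' := by
            intro k' hk'
            have hk'k : k' ≠ k := by
              rintro rfl
              rcases Finset.mem_insert.mp hk' with h1 | h1
              · exact hkj h1
              · exact hkS h1
            have heq := congrFun (hha.trans hh0a.symm) k'
            rw [hφ] at heq
            simp only at heq
            rwa [Function.update_of_ne hk'k, Function.update_of_ne hk'k] at heq
          have hNh : cnb r n G (insert j0 S) h = N := cnb_congr r n G _ h h0 hagree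
          have hsplit : cnb r n G (insert j0 (insert k S)) h
              = N.filter (fun u => G.Adj u (h k)) := by
            rw [Finset.insert_comm, cnb_insert, hNh]
          rw [hBad, Finset.mem_coe, Finset.mem_filter]
          constructor
          · have hTf := (mem_AA.mp hhA).1 k
            simp only [Tf, if_neg hkj, Finset.mem_filter, Finset.mem_univ, true_and] at hTf
            simp only [classFinset, Finset.mem_filter, Finset.mem_univ, true_and]
            rw [hTf]
          · rw [hsplit] at hhcond
            exact hhcond
        · intro h1 hh1 h2 hh2 hk12
          simp only [Finset.coe_filter, Set.mem_setOf_eq] at hh1 hh2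
          funext k'
          by_cases hk' : k' = k
          · rw [hk']; exact hk12
          · have heq := congrFun (hh1.2.trans hh2.2.symm) k'
            rw [hφ] at heq
            simp only at heq
            rwa [Function.update_of_ne hk', Function.update_of_ne hk'] at heq
      exact_mod_cast hcardle
    have htcard : (t.card : ℝ) ≤ (n:ℝ)^(r-3) := by
      have hsub : t ⊆ Fintype.piFinset (fun k' => if k' = j0 then {v} else if k' = k then {y0}
          else Finset.univ.filter (fun u : MV r n => u.1 = k'.1)) := by
        intro a ha
        obtain ⟨h0, hh0B, hh0a⟩ := Finset.mem_image.mp ha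
        have hh0A : h0 ∈ AA r n G d v j0 S := (Finset.mem_filter.mp hh0B).1
        have hpi := (mem_AA.mp hh0A).1
        rw [Fintype.mem_piFinset]
        intro k'
        by_cases h1 : k' = j0
        · subst h1
          rw [if_pos rfl, ← hh0a, hφ]
          simp only
          rw [Function.update_of_ne (fun he => hkj he.symm)]
          have := hpi k'
          simp only [Tf, if_pos rfl] at this
          exact this
        · rw [if_neg h1]
          by_cases h2 : k' = k
          · subst h2
            rw [if_pos rfl, ← hh0a, hφ]
            simp only
            rw [Function.update_self]
            exact Finset.mem_singleton_self y0
          · rw [if_neg h2, ← hh0a, hφ]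
            simp only
            rw [Function.update_of_ne h2]
            have := hpi k'
            simp only [Tf, if_neg h1] at this
            exact this
      have hpc : (Fintype.piFinset (fun k' => if k' = j0 then {v} else if k' = k then {y0}
          else Finset.univ.filter (fun u : MV r n => u.1 = k'.1))).card = n ^ (r-3) := by
        refine card_piFinset_two r n hr j0 k hkj _ ?_ ?_ ?_
        · rw [if_pos rfl]
          exact Finset.card_singleton v
        · rw [if_neg hkj, if_pos rfl]
          exact Finset.card_singleton y0
        · intro k' h1 h2
          rw [if_neg h1, if_neg h2]
          exact card_filter_fst r n k'.1
      have := Finset.card_le_card hsub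
      rw [hpc] at this
      exact_mod_cast this
    have hBsum : (B.card : ℝ) ≤ (t.card : ℝ) * (ε * n) := by
      rw [hsum]
      push_cast
      refine le_trans (Finset.sum_le_sum hfib) ?_
      rw [Finset.sum_const, nsmul_eq_mul]
    have hεn : (0:ℝ) ≤ ε * n := by positivity
    calc (B.card : ℝ) ≤ (t.card : ℝ) * (ε * n) := hBsum
      _ ≤ (n:ℝ)^(r-3) * (ε * n) := mul_le_mul_of_nonneg_right htcard hεn
      _ = ε * ((n:ℝ)^(r-3) * n) := by ring
      _ = ε * (n:ℝ)^(r-3+1) := by rw [pow_succ]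
      _ = ε * (n:ℝ)^(r-2) := by
          congr 1
          congr 1
          omega
  have h1 := Finset.card_le_card_sdiff_add_card (s := AA r n G d v j0 S) (t := B)
  have h2 := Finset.card_le_card hsub1
  have h3 : (AA r n G d v j0 S).card ≤ (AA r n G d v j0 (insert k S)).card + B.card :=
    le_trans h1 (Nat.add_le_add_right h2 _)
  have h4 : ((AA r n G d v j0 S).card : ℝ)
      ≤ ((AA r n G d v j0 (insert k S)).card : ℝ) + B.card := by exact_mod_cast h3
  linarith

lemma main_ind (r n : ℕ) (hr : 3 ≤ r) (hn : 0 < n) (ε d : ℝ) (hε : 0 < ε) (hd : 0 < d)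
    (hd2 : d ≤ 2) (hεd : ε ≤ (d/2)^(r-2)) (G : SimpleGraph (MV r n))
    (hsr : ∀ i : Fin r, i.val ≠ 0 →
      IsSuperRegularR G.Adj ε d (classFinset r n 0) (classFinset r n i.val))
    (v : MV r n) (j0 : Kt r) (hj0 : v.1 = j0.1) :
    ∀ S : Finset (Kt r), S ⊆ Finset.univ.erase j0 →
      (1 - S.card * ε) * (n:ℝ)^(r-2) ≤ ((AA r n G d v j0 S).card : ℝ) := by
  intro S
  induction S using Finset.induction_on with
  | empty =>
    intro _
    have hfull : AA r n G d v j0 ∅ = Fintype.piFinset (Tf r n v j0) := by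
      rw [AA]
      apply Finset.filter_true_of_mem
      intro h hh
      rw [Fintype.mem_piFinset] at hh
      have hhj : h j0 = v := by
        have := hh j0
        rw [show Tf r n v j0 j0 = {v} from if_pos rfl, Finset.mem_singleton] at this
        exact this
      have hvmem : v ∈ classFinset r n j0.1.val := by
        simp only [classFinset, Finset.mem_filter, Finset.mem_univ, true_and]
        rw [hj0]
      have hstep := (hsr j0.1 j0.2).2.2 v hvmem
      have hset : {a | a ∈ classFinset r n 0 ∧ G.Adj a v}.ncard
          = (cnb r n G (insert j0 ∅) h).card := by
        rw [ncard_setOf']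
        congr 1
        ext u
        simp only [cnb, classFinset, Finset.mem_filter, Finset.mem_univ, true_and,
          Finset.mem_insert, Finset.notMem_empty, or_false]
        constructor
        · rintro ⟨hu0, hadj⟩
          exact ⟨hu0, fun k hk => by rw [hk, hhj]; exact hadj⟩
        · rintro ⟨hu0, hadj⟩
          refine ⟨hu0, ?_⟩
          rw [← hhj]
          exact hadj j0 rfl
      have hc0 : (classFinset r n 0).card = n := card_classFinset r n ⟨0, by omega⟩
      rw [hset, hc0] at hstep
      have : (d/2) * (n:ℝ) ≤ d * n := by nlinarith [Nat.cast_nonneg (α := ℝ) n]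
      simp only [Finset.card_empty, zero_add, pow_one]
      linarith
    rw [hfull]
    have hcard : (Fintype.piFinset (Tf r n v j0)).card = n ^ (r-2) := by
      refine card_piFinset_one r n hr j0 _ ?_ ?_
      · simp only [Tf, if_pos rfl]
        exact Finset.card_singleton v
      · intro k' hk'
        simp only [Tf, if_neg hk']
        exact card_filter_fst r n k'.1
    rw [hcard]
    simp only [Finset.card_empty, Nat.cast_zero, zero_mul, sub_zero, one_mul]
    push_cast
    exact le_refl _
  | @insert k S hkS ih =>
    intro hsub
    have hkj : k ≠ j0 := by
      have := hsub (Finset.mem_insert_self k S)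
      exact (Finset.mem_erase.mp this).1
    have hjS : j0 ∉ S := fun hj =>
      (Finset.mem_erase.mp (hsub (Finset.mem_insert_of_mem hj))).1 rfl
    have hScard : S.card + 1 ≤ r - 2 := by
      have h1 := Finset.card_le_card hsub
      rw [Finset.card_insert_of_notMem hkS,
        Finset.card_erase_of_mem (Finset.mem_univ j0), Finset.card_univ,
        card_Kt r (by omega)] at h1
      omega
    have hstep := step_lemma r n hr hn ε d hε hd hd2 hεd G hsr v j0 S k hkS hkj hjS hScard
    have hih := ih (fun x hx => hsub (Finset.mem_insert_of_mem hx))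
    have hc : (((insert k S).card : ℕ) : ℝ) = (S.card : ℝ) + 1 := by
      rw [Finset.card_insert_of_notMem hkS]
      push_cast
      ring
    rw [hc]
    have hexp : (1 - ((S.card:ℝ) + 1) * ε) * (n:ℝ)^(r-2)
        = (1 - (S.card:ℝ) * ε) * (n:ℝ)^(r-2) - ε * (n:ℝ)^(r-2) := by ring
    rw [hexp]
    linarith

theorem statement10 (r n : ℕ) (hr : 3 ≤ r) (ε d : ℝ) (hε : 0 < ε) (hd : 0 < d)
    (hεd : ε ≤ (d / 2) ^ (r - 2))
    (G : SimpleGraph (MV r n)) (hGpart : IsMultipartite r n G)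
    (hsr : ∀ i : Fin r, i.val ≠ 0 →
      IsSuperRegularR G.Adj ε d (classFinset r n 0) (classFinset r n i.val)) :
    -- every vertex of V_2 ∪ ⋯ ∪ V_r lies in at least (1 − (r−2)ε)·n^{r−2} edges of F
    ∀ v : MV r n, v.1.val ≠ 0 →
      (1 - ((r : ℝ) - 2) * ε) * (n : ℝ) ^ (r - 2) ≤
        (Set.ncard {g : {k : Fin r // k.val ≠ 0} → MV r n |
          IsTupleF r n G d g ∧ ∃ k, g k = v} : ℝ) := by
  intro v hv
  have hnn : (0:ℝ) ≤ (Set.ncard {g : {k : Fin r // k.val ≠ 0} → MV r n |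
      IsTupleF r n G d g ∧ ∃ k, g k = v} : ℝ) := Nat.cast_nonneg _
  by_cases hn0 : n = 0
  · subst hn0
    rw [Nat.cast_zero, zero_pow (by omega : r - 2 ≠ 0), mul_zero]
    exact hnn
  by_cases htriv : 1 - ((r:ℝ) - 2) * ε ≤ 0
  · refine le_trans ?_ hnn
    exact mul_nonpos_of_nonpos_of_nonneg htriv (by positivity)
  push_neg at htriv
  have hn : 0 < n := Nat.pos_of_ne_zero hn0
  have hr2 : (1:ℝ) ≤ (r:ℝ) - 2 := by
    have h3 : (3:ℝ) ≤ (r:ℝ) := by exact_mod_cast hr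
    linarith
  have hε1 : ε ≤ 1 := by nlinarith
  have hd2 : d ≤ 2 := by
    have h01 : ((⟨1, by omega⟩ : Fin r)).val ≠ 0 := by simp
    have hc0 : (classFinset r n 0).card = n := card_classFinset r n ⟨0, by omega⟩
    have hc1 : (classFinset r n (1:ℕ)).card = n := card_classFinset r n ⟨1, by omega⟩
    have hεn : ε * (n:ℝ) ≤ (n:ℝ) := by nlinarith [Nat.cast_nonneg (α := ℝ) n]
    have hdlt := (hsr ⟨1, by omega⟩ h01).1 (classFinset r n 0) (Finset.Subset.refl _)
      (classFinset r n (1:ℕ)) (Finset.Subset.refl _)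
      (by rw [hc0]; exact hεn) (by rw [hc1]; exact hεn)
    have hle1 : relDensity G.Adj (classFinset r n 0) (classFinset r n (1:ℕ)) ≤ 1 := by
      apply relDensity_le _ _ _ 1 zero_le_one
      intro b _
      rw [one_mul]
      exact_mod_cast Finset.card_filter_le (classFinset r n 0) (fun a => G.Adj a b)
    linarith
  set j0 : Kt r := ⟨v.1, hv⟩ with hj0'
  have hv1 : v.1 = j0.1 := by rw [hj0']
  have hm := main_ind r n hr hn ε d hε hd hd2 hεd G hsr v j0 hv1
    (Finset.univ.erase j0) (Finset.Subset.refl _)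
  have hSc : (Finset.univ.erase j0).card = r - 2 := by
    rw [Finset.card_erase_of_mem (Finset.mem_univ _), Finset.card_univ, card_Kt r (by omega)]
    omega
  have hcast : (((Finset.univ.erase j0).card : ℕ) : ℝ) = (r:ℝ) - 2 := by
    rw [hSc]
    have : ((r - 2 : ℕ) : ℝ) = (r:ℝ) - 2 := by
      rw [Nat.cast_sub (by omega : 2 ≤ r)]
      norm_num
    rw [this]
  rw [hcast] at hm
  refine le_trans hm ?_
  have hsubset : ↑(AA r n G d v j0 (Finset.univ.erase j0))
      ⊆ {g : {k : Fin r // k.val ≠ 0} → MV r n | IsTupleF r n G d g ∧ ∃ k, g k = v} := by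
    intro g hg
    simp only [Finset.mem_coe] at hg
    rw [mem_AA] at hg
    obtain ⟨hpi, hcnb⟩ := hg
    have hgj0 : g j0 = v := by
      have := hpi j0
      rw [show Tf r n v j0 j0 = {v} from if_pos rfl, Finset.mem_singleton] at this
      exact this
    rw [Finset.insert_erase (Finset.mem_univ j0)] at hcnb
    refine ⟨⟨fun k => mem_Tf_fst r n v j0 k (g k) (hpi k) hv1, ?_⟩, ⟨j0, hgj0⟩⟩
    have hset : {u : MV r n | u.1.val = 0 ∧ ∀ k, G.Adj u (g k)}.ncard
        = (cnb r n G Finset.univ g).card := by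
      rw [ncard_setOf']
      congr 1
      ext u
      simp only [cnb, Finset.mem_filter, Finset.mem_univ, true_and, true_implies]
    rw [hset]
    have hexp : r - 1 = (Finset.univ.erase j0 : Finset (Kt r)).card + 1 := by
      rw [hSc]; omega
    rw [hexp]
    exact hcnb
  have hfin := Set.ncard_le_ncard hsubset (Set.toFinite _)
  rw [Set.ncard_coe_finset] at hfin
  exact_mod_cast hfin
end

section
/- Let r ≥ 3 and let ε, d > 0 with ε ≤ (d/2)^{r−2}. Let G be a balanced r-partite graph on V_1 ⊔ ⋯ ⊔ V_r with |V_i| = n for all i, such that (V_1, V_i) is (ε, d)-super-regular for all i ∈ {2, …, r}. For X ⊆ V_1, let F_X = F_X[V_2, …, V_r] be the (r−1)-uniform (r−1)-partite hypergraph on V_2, …, V_r whose edges are the tuples (v_2, …, v_r) that have at least (d/2)^{r−1}·|V_1| common neighbors in V_1 and at least (d/2)^{r−1}·|X| common neighbors in X. If |X| ≥ (2/d)^{r−2}·ε·n, then, for each i ∈ {2, …, r}, all but at most εn vertices of V_i have degree at least (1 − 2(r−2)ε)·n^{r−2} in F_X. -/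
open MeasureTheory Filter Finset
open scoped Classical

/-- An edge of the auxiliary hypergraph `F_X`: a tuple with one vertex in each of the
classes `V_2, …, V_r` having at least `(d/2)^{r-1}·|V_1|` common neighbors in `V_1` and
at least `(d/2)^{r-1}·|X|` common neighbors in `X`. -/
def IsTupleFX (r n : ℕ) (G : SimpleGraph (MV r n)) (d : ℝ) (X : Finset (MV r n))
    (g : {k : Fin r // k.val ≠ 0} → MV r n) : Prop :=
  IsTupleF r n G d g ∧
  (d / 2) ^ (r - 1) * X.card ≤
    (Set.ncard {u : MV r n | u ∈ X ∧ ∀ k, G.Adj u (g k)} : ℝ)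


lemma classFinset_card (r n j : ℕ) (hj : j < r) : (classFinset r n j).card = n := by
  classical
  have : (classFinset r n j).card = (Finset.univ : Finset (Fin n)).card := by
    refine Finset.card_bij' (fun v _ => v.2) (fun a _ => ((⟨j, hj⟩ : Fin r), a))
      ?_ ?_ ?_ ?_
    · intros; simp
    · intro a _; simp [classFinset]
    · intro v hv; simp only [classFinset, Finset.mem_filter] at hv
      exact Prod.ext (Fin.ext hv.2.symm) rfl
    · intros; rfl
  simpa using this

lemma pair_ncard {r n : ℕ} (R : MV r n → MV r n → Prop) (s t : Finset (MV r n)) :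
    (Set.ncard {p : MV r n × MV r n | p.1 ∈ s ∧ p.2 ∈ t ∧ R p.1 p.2}) =
      ((s ×ˢ t).filter (fun p => R p.1 p.2)).card := by
  classical
  rw [← Set.ncard_coe_finset]
  congr 1
  ext p
  simp [Finset.mem_filter, Finset.mem_product, and_assoc]

lemma pairs_le_sum {r n : ℕ} (R : MV r n → MV r n → Prop) (s t : Finset (MV r n)) :
    ((s ×ˢ t).filter (fun p => R p.1 p.2)).card ≤
      ∑ b ∈ t, (s.filter (fun a => R a b)).card := by
  classical
  rw [← Finset.card_sigma]
  apply Finset.card_le_card_of_injOn (fun p => ⟨p.2, p.1⟩)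
  · intro p hp
    simp only [Finset.mem_coe, Finset.mem_filter, Finset.mem_product] at hp
    simp [Finset.mem_sigma, hp.1.2, hp.1.1, hp.2]
  · intro p _ q _ h
    simp only [Sigma.mk.inj_iff] at h
    exact Prod.ext (by simpa using h.2) h.1

lemma lemmaA {r n : ℕ} {G : SimpleGraph (MV r n)} {ε d : ℝ} (hε : 0 < ε)
    (hn : 1 ≤ n) (i : Fin r) (hi : i.val ≠ 0)
    (hsr : IsSuperRegularR G.Adj ε d (classFinset r n 0) (classFinset r n i.val))
    (S : Finset (MV r n)) (hS : S ⊆ classFinset r n 0) (hScard : ε * n ≤ S.card) :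
    (((classFinset r n i.val).filter
      (fun w => ((S.filter (fun u => G.Adj u w)).card : ℝ) < d * S.card)).card : ℝ)
      < ε * n := by
  classical
  by_contra hcon
  push_neg at hcon
  set B := (classFinset r n i.val).filter
      (fun w => ((S.filter (fun u => G.Adj u w)).card : ℝ) < d * S.card) with hB
  have hc0 : (classFinset r n 0).card = n := classFinset_card r n 0 (by omega)
  have hci : (classFinset r n i.val).card = n := classFinset_card r n i.val i.isLt
  have hd1 : d < relDensity G.Adj S B := by
    apply hsr.1 S hS B (Finset.filter_subset _ _)
    · rw [hc0]; exact hScard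
    · rw [hci]; exact hcon
  have hεn : (0:ℝ) < ε * n := by positivity
  have hSpos : (0:ℝ) < S.card := lt_of_lt_of_le hεn hScard
  have hBpos : (0:ℝ) < B.card := lt_of_lt_of_le hεn hcon
  have hBne : B.Nonempty := Finset.card_pos.mp (by exact_mod_cast hBpos)
  have hd2 : relDensity G.Adj S B < d := by
    rw [relDensity, pair_ncard]
    rw [div_lt_iff₀ (by positivity)]
    have h1 : (((S ×ˢ B).filter (fun p => G.Adj p.1 p.2)).card : ℝ) ≤
        ∑ b ∈ B, ((S.filter (fun u => G.Adj u b)).card : ℝ) := by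
      exact_mod_cast pairs_le_sum G.Adj S B
    have h2 : ∑ b ∈ B, ((S.filter (fun u => G.Adj u b)).card : ℝ) <
        ∑ _b ∈ B, d * S.card := by
      apply Finset.sum_lt_sum_of_nonempty hBne
      intro b hb
      exact (Finset.mem_filter.mp hb).2
    calc (((S ×ˢ B).filter (fun p => G.Adj p.1 p.2)).card : ℝ)
        < ∑ _b ∈ B, d * S.card := lt_of_le_of_lt h1 h2
      _ = d * (S.card * B.card) := by rw [Finset.sum_const]; push_cast; ring
  exact absurd hd1 (not_lt.mpr hd2.le)

section Machinery

variable {r n m : ℕ} (G : SimpleGraph (MV r n)) (d : ℝ)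

/-- Common neighborhood of `v` and the first `t` chosen vertices, inside base set `A`. -/
noncomputable def SetA (A : Finset (MV r n)) (v : MV r n) (w : Fin m → MV r n) (t : ℕ) :
    Finset (MV r n) :=
  A.filter (fun u => G.Adj u v ∧ ∀ s : Fin m, s.val < t → G.Adj u (w s))

lemma SetA_zero (A : Finset (MV r n)) (v : MV r n) (w : Fin m → MV r n) :
    SetA G A v w 0 = A.filter (fun u => G.Adj u v) := by
  simp [SetA]

lemma SetA_succ (A : Finset (MV r n)) (v : MV r n) (w : Fin m → MV r n) (t : ℕ)
    (ht : t < m) :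
    SetA G A v w (t + 1) = (SetA G A v w t).filter (fun u => G.Adj u (w ⟨t, ht⟩)) := by
  ext u
  simp only [SetA, Finset.mem_filter, Finset.filter_filter, and_assoc]
  constructor
  · rintro ⟨hu, hv, hw⟩
    exact ⟨hu, hv, fun s hs => hw s (by omega), hw ⟨t, ht⟩ (by simp)⟩
  · rintro ⟨hu, hv, hw, hwt⟩
    refine ⟨hu, hv, fun s hs => ?_⟩
    rcases Nat.lt_succ_iff_lt_or_eq.mp hs with h | h
    · exact hw s h
    · have : s = ⟨t, ht⟩ := Fin.ext h
      rw [this]; exact hwt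
  
lemma SetA_subset (A : Finset (MV r n)) (v : MV r n) (w : Fin m → MV r n) (t : ℕ) :
    SetA G A v w t ⊆ A := Finset.filter_subset _ _

lemma SetA_congr (A : Finset (MV r n)) (v : MV r n) (w w' : Fin m → MV r n) (t : ℕ)
    (h : ∀ s : Fin m, s.val < t → w s = w' s) :
    SetA G A v w t = SetA G A v w' t := by
  ext u
  simp only [SetA, Finset.mem_filter]
  constructor <;> rintro ⟨hu, hv, hw⟩ <;> refine ⟨hu, hv, fun s hs => ?_⟩
  · rw [← h s hs]; exact hw s hs
  · rw [h s hs]; exact hw s hs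

/-- The step `t` is good: the chosen vertex `w t` has large degree into the current set. -/
def GoodAt (A : Finset (MV r n)) (v : MV r n) (w : Fin m → MV r n) (t : Fin m) : Prop :=
  d * (SetA G A v w t.val).card ≤
    ((SetA G A v w t.val).filter (fun u => G.Adj u (w t))).card

lemma GoodAt_congr (A : Finset (MV r n)) (v : MV r n) (w w' : Fin m → MV r n) (t : Fin m)
    (h : ∀ s : Fin m, s.val ≤ t.val → w s = w' s) :
    GoodAt G d A v w t ↔ GoodAt G d A v w' t := by
  have h1 : SetA G A v w t.val = SetA G A v w' t.val :=
    SetA_congr G A v w w' t.val (fun s hs => h s (le_of_lt hs))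
  rw [GoodAt, GoodAt, h1, h t le_rfl]

lemma SetA_card_ge (hd : 0 ≤ d) (A : Finset (MV r n)) (v : MV r n) (w : Fin m → MV r n)
    (t : ℕ) (ht : t ≤ m) (hgood : ∀ s : Fin m, s.val < t → GoodAt G d A v w s) :
    d ^ t * ((SetA G A v w 0).card : ℝ) ≤ ((SetA G A v w t).card : ℝ) := by
  induction t with
  | zero => simp
  | succ t ih =>
    have htm : t < m := by omega
    have h1 : d ^ t * ((SetA G A v w 0).card : ℝ) ≤ ((SetA G A v w t).card : ℝ) :=
      ih (by omega) (fun s hs => hgood s (by omega))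
    have h2 := hgood ⟨t, htm⟩ (by simp)
    rw [GoodAt] at h2
    rw [SetA_succ G A v w t htm]
    calc d ^ (t+1) * ((SetA G A v w 0).card : ℝ)
        = d * (d ^ t * (SetA G A v w 0).card) := by ring
      _ ≤ d * (SetA G A v w t).card := by
          exact mul_le_mul_of_nonneg_left h1 hd
      _ ≤ _ := h2

end Machinery

lemma card_split (m : ℕ) (t : Fin m) :
    Fintype.card {s : Fin m // s < t} + Fintype.card {s : Fin m // t < s} + 1 = m := by
  classical
  have h1 : Fintype.card {s : Fin m // s < t} = (univ.filter (fun s : Fin m => s < t)).card :=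
    Fintype.card_subtype _
  have h2 : Fintype.card {s : Fin m // t < s} = (univ.filter (fun s : Fin m => t < s)).card :=
    Fintype.card_subtype _
  rw [h1, h2]
  have hdis : Disjoint (univ.filter (fun s : Fin m => s < t))
      (univ.filter (fun s : Fin m => t < s)) := by
    rw [Finset.disjoint_left]
    intro s hs1 hs2
    simp only [Finset.mem_filter] at hs1 hs2
    exact absurd (lt_trans hs1.2 hs2.2) (lt_irrefl s)
  have hun : (univ.filter (fun s : Fin m => s < t)) ∪ (univ.filter (fun s : Fin m => t < s))
      = univ \ {t} := by
    ext s
    simp only [Finset.mem_union, Finset.mem_filter, Finset.mem_univ, true_and,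
      Finset.mem_sdiff, Finset.mem_singleton]
    rw [Fin.lt_def, Fin.lt_def, Fin.ext_iff]
    omega
  have hcu := Finset.card_union_of_disjoint hdis
  rw [hun] at hcu
  have hsd : (univ \ ({t} : Finset (Fin m))).card = m - 1 := by
    rw [Finset.card_sdiff_of_subset (by simp)]; simp
  have hm : 0 < m := t.pos
  omega

lemma count_good (m n : ℕ) (hn : 1 ≤ n) (K : ℝ) (hK : 0 ≤ K)
    (Good : (Fin m → Fin n) → Fin m → Prop)
    (Hdep : ∀ f f' t, (∀ s : Fin m, s.val ≤ t.val → f s = f' s) → Good f t → Good f' t)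
    (Hbr : ∀ f (t : Fin m), (∀ s : Fin m, s < t → Good f s) →
      ((Finset.univ.filter
        (fun a : Fin n => ¬ Good (Function.update f t a) t)).card : ℝ) ≤ K) :
    (n:ℝ)^m - m * K * (n:ℝ)^(m-1) ≤
      ((Finset.univ.filter (fun f : Fin m → Fin n => ∀ t, Good f t)).card : ℝ) := by
  classical
  set AllGood := Finset.univ.filter (fun f : Fin m → Fin n => ∀ t, Good f t) with hAG
  set Bad := fun t : Fin m => Finset.univ.filter
      (fun f : Fin m → Fin n => (∀ s : Fin m, s < t → Good f s) ∧ ¬ Good f t) with hBad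
  -- Step 1: decomposition
  have hdecomp : (Finset.univ : Finset (Fin m → Fin n)) ⊆
      AllGood ∪ Finset.univ.biUnion Bad := by
    intro f _
    by_cases hf : ∀ t, Good f t
    · exact Finset.mem_union_left _ (by simp [hAG, hf])
    · push_neg at hf
      set T := Finset.univ.filter (fun t : Fin m => ¬ Good f t) with hT
      have hTne : T.Nonempty := by
        obtain ⟨t, ht⟩ := hf
        exact ⟨t, by simp [hT, ht]⟩
      set t₀ := T.min' hTne with ht₀
      apply Finset.mem_union_right
      apply Finset.mem_biUnion.mpr
      refine ⟨t₀, Finset.mem_univ _, ?_⟩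
      simp only [hBad, Finset.mem_filter, Finset.mem_univ, true_and]
      constructor
      · intro s hs
        by_contra hgs
        have : t₀ ≤ s := Finset.min'_le T s (by simp [hT, hgs])
        exact absurd (lt_of_lt_of_le hs this) (lt_irrefl _)
      · have := T.min'_mem hTne
        simpa [hT] using this
  -- Step 2: bound on Bad t
  have hbadcard : ∀ t : Fin m, ((Bad t).card : ℝ) ≤ K * (n:ℝ)^(m-1) := by
    intro t
    set a := Fintype.card {s : Fin m // s < t} with ha
    set b := Fintype.card {s : Fin m // t < s} with hb
    have hab : a + b + 1 = m := card_split m t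
    set z : Fin n := ⟨0, hn⟩ with hz
    set ρ : (Fin m → Fin n) → (Fin m → Fin n) :=
      fun f s => if s < t then f s else z with hρ
    have hfib := Finset.card_eq_sum_card_fiberwise
      (f := ρ) (s := Bad t) (t := (Bad t).image ρ)
      (fun f hf => Finset.mem_image_of_mem ρ hf)
    -- fiber bounds
    have hfiber : ∀ p ∈ (Bad t).image ρ,
        (((Bad t).filter (fun f => ρ f = p)).card : ℝ) ≤ K * (n:ℝ)^b := by
      intro p hp
      obtain ⟨f₀, hf₀, hρf₀⟩ := Finset.mem_image.mp hp
      simp only [hBad, Finset.mem_filter, Finset.mem_univ, true_and] at hf₀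
      -- p is prefix-good
      have hpg : ∀ s : Fin m, s < t → Good p s := by
        intro s hs
        refine Hdep f₀ p s (fun s' hs' => ?_) (hf₀.1 s hs)
        rw [← hρf₀]
        simp only [hρ]
        rw [if_pos (lt_of_le_of_lt (show s' ≤ s from hs') hs)]
      set Bp := Finset.univ.filter (fun x : Fin n => ¬ Good (Function.update p t x) t)
        with hBp
      have hBpK : ((Bp).card : ℝ) ≤ K := Hbr p t hpg
      -- injection fiber → Bp ×ˢ univ
      have hinj : ((Bad t).filter (fun f => ρ f = p)).card ≤
          (Bp ×ˢ (Finset.univ : Finset ({s : Fin m // t < s} → Fin n))).card := by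
        apply Finset.card_le_card_of_injOn
          (fun f => (f t, fun s : {s : Fin m // t < s} => f s.val))
        · intro f hf
          simp only [Finset.mem_coe, Finset.mem_filter] at hf
          obtain ⟨hfB, hfρ⟩ := hf
          simp only [hBad, Finset.mem_filter, Finset.mem_univ, true_and] at hfB
          rw [Finset.mem_coe]
          apply Finset.mem_product.mpr
          refine ⟨?_, Finset.mem_univ _⟩
          simp only [hBp, Finset.mem_filter, Finset.mem_univ, true_and]
          intro hgood
          apply hfB.2
          refine Hdep _ f t (fun s' hs' => ?_) hgood
          rcases lt_trichotomy s' t with h | h | h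
          · rw [Function.update_of_ne (ne_of_lt h)]
            rw [← hfρ]; simp only [hρ]; rw [if_pos h]
          · rw [h, Function.update_self]
          · exact absurd (lt_of_le_of_lt hs' h) (lt_irrefl _)
        · intro f hf g hg hfg
          simp only [Finset.mem_coe, Finset.mem_filter] at hf hg
          obtain ⟨hf1, hf2⟩ := hf
          obtain ⟨hg1, hg2⟩ := hg
          simp only [Prod.mk.injEq] at hfg
          funext s
          rcases lt_trichotomy s t with h | h | h
          · have e1 : f s = p s := by rw [← hf2]; simp only [hρ]; rw [if_pos h]
            have e2 : g s = p s := by rw [← hg2]; simp only [hρ]; rw [if_pos h]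
            rw [e1, e2]
          · rw [h]; exact hfg.1
          · exact congrFun hfg.2 ⟨s, h⟩
      have hcodom : ((Bp ×ˢ (Finset.univ : Finset ({s : Fin m // t < s} → Fin n))).card : ℝ)
          ≤ K * (n:ℝ)^b := by
        rw [Finset.card_product]
        push_cast
        have : ((Finset.univ : Finset ({s : Fin m // t < s} → Fin n)).card : ℝ)
            = (n:ℝ)^b := by
          rw [Finset.card_univ, Fintype.card_fun]
          push_cast
          simp [hb]
        rw [this]
        exact mul_le_mul_of_nonneg_right hBpK (by positivity)
      calc (((Bad t).filter (fun f => ρ f = p)).card : ℝ)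
          ≤ _ := by exact_mod_cast hinj
        _ ≤ K * (n:ℝ)^b := hcodom
    -- image bound
    have himg : (((Bad t).image ρ).card : ℝ) ≤ (n:ℝ)^a := by
      have hsub : ((Bad t).image ρ).card ≤
          (Finset.univ : Finset ({s : Fin m // s < t} → Fin n)).card := by
        apply Finset.card_le_card_of_injOn (fun p => fun s : {s : Fin m // s < t} => p s.val)
        · intro p _; exact Finset.mem_univ _
        · intro p hp q hq hpq
          simp only [Finset.mem_coe, Finset.mem_image] at hp hq
          obtain ⟨f₁, _, hf₁⟩ := hp
          obtain ⟨f₂, _, hf₂⟩ := hq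
          funext s
          by_cases h : s < t
          · exact congrFun hpq ⟨s, h⟩
          · rw [← hf₁, ← hf₂]; simp only [hρ]; rw [if_neg h, if_neg h]
      calc (((Bad t).image ρ).card : ℝ)
          ≤ ((Finset.univ : Finset ({s : Fin m // s < t} → Fin n)).card : ℝ) := by
            exact_mod_cast hsub
        _ = (n:ℝ)^a := by
            rw [Finset.card_univ, Fintype.card_fun]; push_cast; simp [ha]
    calc ((Bad t).card : ℝ) = ∑ p ∈ (Bad t).image ρ,
          (((Bad t).filter (fun f => ρ f = p)).card : ℝ) := by exact_mod_cast hfib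
      _ ≤ ∑ _p ∈ (Bad t).image ρ, K * (n:ℝ)^b := Finset.sum_le_sum hfiber
      _ = ((Bad t).image ρ).card * (K * (n:ℝ)^b) := by rw [Finset.sum_const]; simp
      _ ≤ (n:ℝ)^a * (K * (n:ℝ)^b) := by
          apply mul_le_mul_of_nonneg_right himg (by positivity)
      _ = K * ((n:ℝ)^a * (n:ℝ)^b) := by ring
      _ = K * (n:ℝ)^(m-1) := by rw [← pow_add]; congr 2; omega
  -- Step 3: combine
  have hcard : ((Finset.univ : Finset (Fin m → Fin n)).card : ℝ) = (n:ℝ)^m := by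
    rw [Finset.card_univ, Fintype.card_fun]; push_cast; simp
  have h1 : ((Finset.univ : Finset (Fin m → Fin n)).card : ℝ) ≤
      (AllGood.card : ℝ) + ∑ t : Fin m, ((Bad t).card : ℝ) := by
    have := Finset.card_le_card hdecomp
    have h2 := Finset.card_union_le AllGood (Finset.univ.biUnion Bad)
    have h3 := Finset.card_biUnion_le (s := (Finset.univ : Finset (Fin m))) (t := Bad)
    have : (Finset.univ : Finset (Fin m → Fin n)).card ≤
        AllGood.card + ∑ t : Fin m, (Bad t).card := by omega
    exact_mod_cast this
  have h2 : ∑ t : Fin m, ((Bad t).card : ℝ) ≤ m * K * (n:ℝ)^(m-1) := by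
    calc ∑ t : Fin m, ((Bad t).card : ℝ) ≤ ∑ _t : Fin m, K * (n:ℝ)^(m-1) :=
        Finset.sum_le_sum (fun t _ => hbadcard t)
      _ = m * K * (n:ℝ)^(m-1) := by rw [Finset.sum_const]; simp [mul_assoc]
  rw [hcard] at h1
  linarith

set_option maxHeartbeats 8000000 in
lemma key_estimate (r n : ℕ) (hr : 3 ≤ r) (ε d : ℝ) (hε : 0 < ε) (hd : 0 < d)
    (hεd : ε ≤ (d / 2) ^ (r - 2))
    (G : SimpleGraph (MV r n))
    (hsr : ∀ i : Fin r, i.val ≠ 0 →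
      IsSuperRegularR G.Adj ε d (classFinset r n 0) (classFinset r n i.val))
    (X : Finset (MV r n)) (hX : ∀ v ∈ X, v.1.val = 0)
    (hXcard : (2 / d) ^ (r - 2) * ε * n ≤ (X.card : ℝ))
    (hn : 1 ≤ n) (hd1 : d < 1) (hXsub : X ⊆ classFinset r n 0)
    (hXεn : ε * n ≤ (X.card : ℝ))
    (i : Fin r) (hi : i.val ≠ 0) (v : MV r n) (hvi : v.1 = i)
    (hdX : d * (X.card : ℝ) ≤ ((X.filter (fun u => G.Adj u v)).card : ℝ)) :
    (1 - 2 * ((r : ℝ) - 2) * ε) * (n : ℝ) ^ (r - 2) ≤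
      (Set.ncard {g : {k : Fin r // k.val ≠ 0} → MV r n |
          IsTupleFX r n G d X g ∧ ∃ k, g k = v} : ℝ) := by
  classical
  have hr0 : 0 < r := by omega
  have hc0 : (classFinset r n 0).card = n := classFinset_card r n 0 hr0
  have hd2 : (0:ℝ) < d / 2 := by positivity
  have hdd2 : d / 2 ≤ d := by linarith
  have hvmem : v ∈ classFinset r n i.val := by simp [classFinset, hvi]
  -- the index equivalence
  have hJcard : Fintype.card {k : Fin r // k.val ≠ 0 ∧ k ≠ i} = r - 2 := by
    rw [Fintype.card_subtype]
    have hneg : (Finset.univ.filter (fun k : Fin r => ¬(k.val ≠ 0 ∧ k ≠ i))) =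
        {(⟨0, hr0⟩ : Fin r), i} := by
      ext k
      simp only [Finset.mem_filter, Finset.mem_univ, true_and, not_and_or, not_not,
        Finset.mem_insert, Finset.mem_singleton, Fin.ext_iff]
      try omega
    have hnegcard : (Finset.univ.filter (fun k : Fin r => ¬(k.val ≠ 0 ∧ k ≠ i))).card = 2 := by
      rw [hneg]
      rw [Finset.card_insert_of_notMem (by simp only [Finset.mem_singleton, Fin.ext_iff]; omega)]
      simp
    have := Finset.card_filter_add_card_filter_not
      (s := (Finset.univ : Finset (Fin r))) (p := fun k : Fin r => k.val ≠ 0 ∧ k ≠ i)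
    rw [hnegcard] at this
    simp only [Finset.card_univ, Fintype.card_fin] at this
    omega
  set e : Fin (r-2) ≃ {k : Fin r // k.val ≠ 0 ∧ k ≠ i} :=
    (Fintype.equivFinOfCardEq hJcard).symm with he
  set w : (Fin (r-2) → Fin n) → Fin (r-2) → MV r n :=
    fun f t => (((e t : {k : Fin r // k.val ≠ 0 ∧ k ≠ i}) : Fin r), f t) with hw
  set Good : (Fin (r-2) → Fin n) → Fin (r-2) → Prop := fun f t =>
    GoodAt G d (classFinset r n 0) v (w f) t ∧ GoodAt G d X v (w f) t with hGood
  -- base sizes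
  have hSV0 : ∀ f : Fin (r-2) → Fin n,
      d * (n:ℝ) < ((SetA G (classFinset r n 0) v (w f) 0).card : ℝ) := by
    intro f
    have h := (hsr i hi).2.2 v hvmem
    have hset : {a : MV r n | a ∈ classFinset r n 0 ∧ G.Adj a v} =
        ↑((classFinset r n 0).filter (fun u => G.Adj u v)) := by
      ext u; simp
    rw [hset, Set.ncard_coe_finset, hc0] at h
    rw [SetA_zero]
    exact h
  have hSX0 : ∀ f : Fin (r-2) → Fin n,
      d * (X.card : ℝ) ≤ ((SetA G X v (w f) 0).card : ℝ) := by
    intro f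
    rw [SetA_zero]
    exact hdX
  -- prefix-good size bounds
  have hεpow : ∀ t : ℕ, t + 1 ≤ r - 2 → ε ≤ d ^ (t + 1) := by
    intro t ht
    calc ε ≤ (d/2)^(r-2) := hεd
      _ ≤ d^(r-2) := pow_le_pow_left₀ hd2.le hdd2 _
      _ ≤ d^(t+1) := pow_le_pow_of_le_one hd.le hd1.le ht
  have hSVsize : ∀ (f : Fin (r-2) → Fin n) (t : Fin (r-2)),
      (∀ s : Fin (r-2), s.val < t.val → GoodAt G d (classFinset r n 0) v (w f) s) →
      ε * n ≤ ((SetA G (classFinset r n 0) v (w f) t.val).card : ℝ) := by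
    intro f t hg
    have h1 := SetA_card_ge G d hd.le (classFinset r n 0) v (w f) t.val t.isLt.le hg
    calc ε * n ≤ d^(t.val+1) * n := by
          apply mul_le_mul_of_nonneg_right (hεpow t.val t.isLt) (by positivity)
      _ = d^(t.val) * (d * n) := by rw [pow_succ]; ring
      _ ≤ d^(t.val) * ((SetA G (classFinset r n 0) v (w f) 0).card : ℝ) := by
          apply mul_le_mul_of_nonneg_left (hSV0 f).le (by positivity)
      _ ≤ _ := h1
  have hSXsize : ∀ (f : Fin (r-2) → Fin n) (t : Fin (r-2)),
      (∀ s : Fin (r-2), s.val < t.val → GoodAt G d X v (w f) s) →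
      ε * n ≤ ((SetA G X v (w f) t.val).card : ℝ) := by
    intro f t hg
    have h1 := SetA_card_ge G d hd.le X v (w f) t.val t.isLt.le hg
    have hmix : (d/2)^(r-2) * ((2/d)^(r-2) * (ε * n)) = ε * n := by
      rw [← mul_assoc, ← mul_pow]
      have : d / 2 * (2 / d) = 1 := by field_simp
      rw [this, one_pow, one_mul]
    calc ε * n = (d/2)^(r-2) * ((2/d)^(r-2) * (ε * n)) := hmix.symm
      _ ≤ (d/2)^(r-2) * (X.card : ℝ) := by
          apply mul_le_mul_of_nonneg_left _ (by positivity)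
          calc (2/d)^(r-2) * (ε * n) = (2/d)^(r-2) * ε * n := by ring
            _ ≤ X.card := hXcard
      _ ≤ d^(r-2) * (X.card : ℝ) := by
          apply mul_le_mul_of_nonneg_right (pow_le_pow_left₀ hd2.le hdd2 _) (by positivity)
      _ ≤ d^(t.val+1) * (X.card : ℝ) := by
          apply mul_le_mul_of_nonneg_right
            (pow_le_pow_of_le_one hd.le hd1.le t.isLt) (by positivity)
      _ = d^(t.val) * (d * X.card) := by rw [pow_succ]; ring
      _ ≤ d^(t.val) * ((SetA G X v (w f) 0).card : ℝ) := by
          apply mul_le_mul_of_nonneg_left (hSX0 f) (by positivity)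
      _ ≤ _ := h1
  -- dependence
  have hdep : ∀ (f f' : Fin (r-2) → Fin n) (t : Fin (r-2)),
      (∀ s : Fin (r-2), s.val ≤ t.val → f s = f' s) → Good f t → Good f' t := by
    intro f f' t hag hg
    have hwag : ∀ s : Fin (r-2), s.val ≤ t.val → w f s = w f' s := by
      intro s hs
      simp only [hw]
      rw [hag s hs]
    exact ⟨(GoodAt_congr G d _ v (w f) (w f') t hwag).mp hg.1,
      (GoodAt_congr G d X v (w f) (w f') t hwag).mp hg.2⟩
  -- branching bound
  have hbr : ∀ (f : Fin (r-2) → Fin n) (t : Fin (r-2)),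
      (∀ s : Fin (r-2), s < t → Good f s) →
      ∀ (D : Finset (Fin n)), (∀ a : Fin n, a ∈ D ↔ ¬ Good (Function.update f t a) t) →
      ((D.card : ℝ)) ≤ 2 * (ε * n) := by
    intro f t hpre D hD
    set SV := SetA G (classFinset r n 0) v (w f) t.val with hSVd
    set SX := SetA G X v (w f) t.val with hSXd
    have hSVc : ε * n ≤ (SV.card : ℝ) :=
      hSVsize f t (fun s hs => (hpre s hs).1)
    have hSXc : ε * n ≤ (SX.card : ℝ) :=
      hSXsize f t (fun s hs => (hpre s hs).2)
    set j : Fin r := ((e t : {k : Fin r // k.val ≠ 0 ∧ k ≠ i}) : Fin r) with hjd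
    have hj0 : j.val ≠ 0 := (e t).2.1
    set BV := (classFinset r n j.val).filter
      (fun w' => ((SV.filter (fun u => G.Adj u w')).card : ℝ) < d * SV.card) with hBVd
    set BX := (classFinset r n j.val).filter
      (fun w' => ((SX.filter (fun u => G.Adj u w')).card : ℝ) < d * SX.card) with hBXd
    have hBV : (BV.card : ℝ) < ε * n :=
      lemmaA hε hn j hj0 (hsr j hj0) SV (SetA_subset G _ v _ _) hSVc
    have hBX : (BX.card : ℝ) < ε * n :=
      lemmaA hε hn j hj0 (hsr j hj0) SX
        (fun u hu => hXsub (SetA_subset G X v (w f) t.val hu)) hSXc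
    have hinj : D.card ≤ (BV ∪ BX).card := by
      apply Finset.card_le_card_of_injOn (fun a => ((j, a) : MV r n))
      · intro a ha
        have ha := (hD a).mp ha
        have hSVeq : SetA G (classFinset r n 0) v (w (Function.update f t a)) t.val = SV := by
          apply SetA_congr
          intro s hs
          simp only [hw]
          rw [Function.update_of_ne (fun hc => by rw [hc] at hs; exact lt_irrefl _ hs)]
        have hSXeq : SetA G X v (w (Function.update f t a)) t.val = SX := by
          apply SetA_congr
          intro s hs
          simp only [hw]
          rw [Function.update_of_ne (fun hc => by rw [hc] at hs; exact lt_irrefl _ hs)]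
        have hwt : w (Function.update f t a) t = (j, a) := by
          simp only [hw, Function.update_self, hjd]
        simp only [hGood, not_and_or] at ha
        rcases ha with h | h
        · rw [GoodAt, hSVeq, hwt] at h
          push_neg at h
          apply Finset.mem_union_left
          rw [hBVd, Finset.mem_filter]
          exact ⟨by simp [classFinset], h⟩
        · rw [GoodAt, hSXeq, hwt] at h
          push_neg at h
          apply Finset.mem_union_right
          rw [hBXd, Finset.mem_filter]
          exact ⟨by simp [classFinset], h⟩
      · intro a _ b _ hab
        simpa using congrArg Prod.snd hab
    calc ((D.card : ℝ))
        ≤ ((BV ∪ BX).card : ℝ) := by exact_mod_cast hinj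
      _ ≤ (BV.card : ℝ) + (BX.card : ℝ) := by exact_mod_cast Finset.card_union_le BV BX
      _ ≤ 2 * (ε * n) := by linarith
  -- counting
  have hcount := count_good (r-2) n hn (2*(ε*n)) (by positivity) Good hdep
    (fun f t h => hbr f t h _ (fun a => by simp))
  set AG := Finset.univ.filter (fun f : Fin (r-2) → Fin n => ∀ t, Good f t) with hAGd
  have hpow : (n:ℝ) * (n:ℝ)^(r-2-1) = (n:ℝ)^(r-2) := by
    rw [← pow_succ']
    congr 1
    omega
  have hAGcard : (1 - 2 * ((r:ℝ) - 2) * ε) * (n:ℝ)^(r-2) ≤ (AG.card : ℝ) := by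
    have hcast : ((r - 2 : ℕ) : ℝ) = (r:ℝ) - 2 := by
      push_cast [Nat.cast_sub (by omega : 2 ≤ r)]
      ring
    have hkey : ((r-2:ℕ):ℝ) * (2*(ε*n)) * (n:ℝ)^(r-2-1) = 2 * ((r:ℝ)-2) * ε * (n:ℝ)^(r-2) := by
      rw [hcast, ← hpow]
      ring
    have hgoal : (1 - 2 * ((r:ℝ) - 2) * ε) * (n:ℝ)^(r-2) =
        (n:ℝ)^(r-2) - ((r-2:ℕ):ℝ) * (2*(ε*n)) * (n:ℝ)^(r-2-1) := by
      rw [hkey]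
      ring
    rw [hgoal, hAGd]
    convert hcount using 6
  -- the tuple map
  set gmap : (Fin (r-2) → Fin n) → ({k : Fin r // k.val ≠ 0} → MV r n) :=
    fun f k => if h : (k : Fin r) = i then v
      else (((k : Fin r)), f (e.symm ⟨(k : Fin r), k.2, h⟩)) with hgmap
  have hiff : ∀ (f : Fin (r-2) → Fin n) (u : MV r n),
      (∀ k : {k : Fin r // k.val ≠ 0}, G.Adj u (gmap f k)) ↔
      (G.Adj u v ∧ ∀ s : Fin (r-2), s.val < r-2 → G.Adj u (w f s)) := by
    intro f u
    constructor
    · intro h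
      constructor
      · have hk := h ⟨i, hi⟩
        simp only [hgmap] at hk
        simpa using hk
      · intro s _
        have hk := h ⟨(e s).1, (e s).2.1⟩
        simp only [hgmap] at hk
        rw [dif_neg (e s).2.2] at hk
        have heq : (⟨(e s).1, (e s).2.1, (e s).2.2⟩ : {k : Fin r // k.val ≠ 0 ∧ k ≠ i})
            = e s := Subtype.ext rfl
        rw [heq, Equiv.symm_apply_apply] at hk
        simp only [hw]
        exact hk
    · rintro ⟨hv, hws⟩ k
      simp only [hgmap]
      by_cases h : (k : Fin r) = i
      · rw [dif_pos h]; exact hv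
      · rw [dif_neg h]
        have hk := hws (e.symm ⟨(k : Fin r), k.2, h⟩) (e.symm ⟨(k : Fin r), k.2, h⟩).isLt
        simp only [hw] at hk
        rw [Equiv.apply_symm_apply] at hk
        exact hk
  have hr1 : r - 1 = (r-2) + 1 := by omega
  have hgm : ∀ f ∈ AG, (gmap f) ∈ {g : {k : Fin r // k.val ≠ 0} → MV r n |
      IsTupleFX r n G d X g ∧ ∃ k, g k = v} := by
    intro f hf
    rw [hAGd, Finset.mem_filter] at hf
    have hall := hf.2
    have hgV : ∀ s : Fin (r-2), s.val < r-2 →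
        GoodAt G d (classFinset r n 0) v (w f) s := fun s _ => (hall s).1
    have hgX : ∀ s : Fin (r-2), s.val < r-2 →
        GoodAt G d X v (w f) s := fun s _ => (hall s).2
    have hSVm : (d/2)^(r-1) * (n:ℝ) ≤
        ((SetA G (classFinset r n 0) v (w f) (r-2)).card : ℝ) := by
      have h1 := SetA_card_ge G d hd.le (classFinset r n 0) v (w f) (r-2) le_rfl hgV
      calc (d/2)^(r-1) * (n:ℝ) ≤ d^(r-1) * n := by
            apply mul_le_mul_of_nonneg_right (pow_le_pow_left₀ hd2.le hdd2 _) (by positivity)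
        _ = d^(r-2) * (d * n) := by rw [hr1, pow_succ]; ring
        _ ≤ d^(r-2) * ((SetA G (classFinset r n 0) v (w f) 0).card : ℝ) := by
            apply mul_le_mul_of_nonneg_left (hSV0 f).le (by positivity)
        _ ≤ _ := h1
    have hSXm : (d/2)^(r-1) * ((X.card:ℕ):ℝ) ≤
        ((SetA G X v (w f) (r-2)).card : ℝ) := by
      have h1 := SetA_card_ge G d hd.le X v (w f) (r-2) le_rfl hgX
      calc (d/2)^(r-1) * ((X.card:ℕ):ℝ) ≤ d^(r-1) * X.card := by
            apply mul_le_mul_of_nonneg_right (pow_le_pow_left₀ hd2.le hdd2 _) (by positivity)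
        _ = d^(r-2) * (d * X.card) := by rw [hr1, pow_succ]; ring
        _ ≤ d^(r-2) * ((SetA G X v (w f) 0).card : ℝ) := by
            apply mul_le_mul_of_nonneg_left (hSX0 f) (by positivity)
        _ ≤ _ := h1
    have hsetV : {u : MV r n | u.1.val = 0 ∧ ∀ k, G.Adj u (gmap f k)} =
        ↑(SetA G (classFinset r n 0) v (w f) (r-2)) := by
      ext u
      constructor
      · rintro ⟨h0, hk⟩
        rw [hiff f u] at hk
        simp only [SetA, Finset.mem_coe, Finset.mem_filter]
        exact ⟨by simp [classFinset, h0], hk.1, hk.2⟩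
      · intro hu
        simp only [SetA, Finset.mem_coe, Finset.mem_filter] at hu
        refine ⟨by simpa [classFinset] using hu.1, ?_⟩
        rw [hiff f u]
        exact ⟨hu.2.1, hu.2.2⟩
    have hsetX : {u : MV r n | u ∈ X ∧ ∀ k, G.Adj u (gmap f k)} =
        ↑(SetA G X v (w f) (r-2)) := by
      ext u
      constructor
      · rintro ⟨h0, hk⟩
        rw [hiff f u] at hk
        simp only [SetA, Finset.mem_coe, Finset.mem_filter]
        exact ⟨h0, hk.1, hk.2⟩
      · intro hu
        simp only [SetA, Finset.mem_coe, Finset.mem_filter] at hu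
        refine ⟨hu.1, ?_⟩
        rw [hiff f u]
        exact ⟨hu.2.1, hu.2.2⟩
    refine ⟨⟨⟨?_, ?_⟩, ?_⟩, ⟨⟨i, hi⟩, ?_⟩⟩
    · intro k
      simp only [hgmap]
      by_cases h : (k : Fin r) = i
      · rw [dif_pos h, hvi, h]
      · rw [dif_neg h]
    · rw [hsetV, Set.ncard_coe_finset]
      exact hSVm
    · rw [hsetX, Set.ncard_coe_finset]
      exact hSXm
    · simp [hgmap]
  have hginj : Set.InjOn gmap ↑AG := by
    intro f _ f' _ h
    funext t
    have hk := congrFun h ⟨(e t).1, (e t).2.1⟩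
    simp only [hgmap] at hk
    rw [dif_neg (e t).2.2, dif_neg (e t).2.2] at hk
    have heq : (⟨(e t).1, (e t).2.1, (e t).2.2⟩ : {k : Fin r // k.val ≠ 0 ∧ k ≠ i})
        = e t := Subtype.ext rfl
    rw [heq, Equiv.symm_apply_apply] at hk
    exact congrArg Prod.snd hk
  calc (1 - 2*((r:ℝ)-2)*ε) * (n:ℝ)^(r-2) ≤ (AG.card : ℝ) := hAGcard
    _ = ((AG.image gmap).card : ℝ) := by rw [Finset.card_image_of_injOn hginj]
    _ = ((↑(AG.image gmap) : Set ({k : Fin r // k.val ≠ 0} → MV r n)).ncard : ℝ) := by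
        rw [Set.ncard_coe_finset]
    _ ≤ _ := by
        have hsub2 : (↑(AG.image gmap) : Set ({k : Fin r // k.val ≠ 0} → MV r n)) ⊆
            {g | IsTupleFX r n G d X g ∧ ∃ k, g k = v} := by
          intro g hg
          obtain ⟨f, hf, rfl⟩ := Finset.mem_image.mp (Finset.mem_coe.mp hg)
          exact hgm f hf
        exact_mod_cast Set.ncard_le_ncard hsub2 (Set.toFinite _)

theorem statement11 (r n : ℕ) (hr : 3 ≤ r) (ε d : ℝ) (hε : 0 < ε) (hd : 0 < d)
    (hεd : ε ≤ (d / 2) ^ (r - 2))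
    (G : SimpleGraph (MV r n)) (hGpart : IsMultipartite r n G)
    (hsr : ∀ i : Fin r, i.val ≠ 0 →
      IsSuperRegularR G.Adj ε d (classFinset r n 0) (classFinset r n i.val))
    (X : Finset (MV r n)) (hX : ∀ v ∈ X, v.1.val = 0)
    (hXcard : (2 / d) ^ (r - 2) * ε * n ≤ (X.card : ℝ)) :
    -- for each i ∈ {2,…,r}, all but at most εn vertices of V_i have degree at least
    -- (1 − 2(r−2)ε)·n^{r−2} in F_X
    ∀ i : Fin r, i.val ≠ 0 →
      (Set.ncard {v : MV r n | v.1 = i ∧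
        (Set.ncard {g : {k : Fin r // k.val ≠ 0} → MV r n |
          IsTupleFX r n G d X g ∧ ∃ k, g k = v} : ℝ) <
            (1 - 2 * ((r : ℝ) - 2) * ε) * (n : ℝ) ^ (r - 2)} : ℝ) ≤ ε * n := by
  classical
  intro i hi
  rcases Nat.eq_zero_or_pos n with hn0 | hn
  · subst hn0
    have hempty : {v : MV r 0 | v.1 = i ∧
        (Set.ncard {g : {k : Fin r // k.val ≠ 0} → MV r 0 |
          IsTupleFX r 0 G d X g ∧ ∃ k, g k = v} : ℝ) <
            (1 - 2 * ((r : ℝ) - 2) * ε) * (0 : ℕ) ^ (r - 2)} = ∅ :=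
      Set.eq_empty_of_forall_notMem (fun v _ => v.2.elim0)
    rw [hempty, Set.ncard_empty]
    simp
  have hr0 : 0 < r := by omega
  have hc0 : (classFinset r n 0).card = n := classFinset_card r n 0 hr0
  -- d < 1
  have hd1 : d < 1 := by
    set j : Fin r := ⟨1, by omega⟩ with hj
    set b : MV r n := (j, ⟨0, hn⟩) with hbdef
    have hbmem : b ∈ classFinset r n j.val := by simp [classFinset, hbdef]
    have h := (hsr j (by simp [hj])).2.2 b hbmem
    have hset : {a : MV r n | a ∈ classFinset r n 0 ∧ G.Adj a b} =
        ↑((classFinset r n 0).filter (fun u => G.Adj u b)) := by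
      ext u; simp [and_comm]
    rw [hset, Set.ncard_coe_finset, hc0] at h
    have hle : ((classFinset r n 0).filter (fun u => G.Adj u b)).card ≤ n :=
      le_trans (Finset.card_le_card (Finset.filter_subset _ _)) (le_of_eq hc0)
    have : d * n < 1 * n := by
      rw [one_mul]
      exact lt_of_lt_of_le h (by exact_mod_cast hle)
    exact lt_of_mul_lt_mul_right this (by positivity)
  have hd2 : (0:ℝ) < d / 2 := by positivity
  have hdd2 : d / 2 ≤ d := by linarith
  -- X is large
  have hXsub : X ⊆ classFinset r n 0 := by
    intro u hu; simp [classFinset, hX u hu]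
  have h2d1 : (1:ℝ) ≤ (2/d) ^ (r-2) := one_le_pow₀ (by
    rw [le_div_iff₀ hd]; linarith)
  have hXεn : ε * n ≤ (X.card : ℝ) := by
    calc ε * n = 1 * (ε * n) := by ring
      _ ≤ (2/d)^(r-2) * (ε * n) := by
          apply mul_le_mul_of_nonneg_right h2d1 (by positivity)
      _ = (2/d)^(r-2) * ε * n := by ring
      _ ≤ X.card := hXcard
  -- the exceptional set
  set B := (classFinset r n i.val).filter
      (fun w => ((X.filter (fun u => G.Adj u w)).card : ℝ) < d * X.card) with hBdef
  have hBcard : (B.card : ℝ) < ε * n := lemmaA hε hn i hi (hsr i hi) X hXsub hXεn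
  -- main inclusion
  have hsub : {v : MV r n | v.1 = i ∧
        (Set.ncard {g : {k : Fin r // k.val ≠ 0} → MV r n |
          IsTupleFX r n G d X g ∧ ∃ k, g k = v} : ℝ) <
            (1 - 2 * ((r : ℝ) - 2) * ε) * (n : ℝ) ^ (r - 2)} ⊆ ↑B := by
    intro v hv
    obtain ⟨hvi, hlt⟩ := hv
    by_contra hvB
    apply absurd hlt
    push_neg
    have hvmem : v ∈ classFinset r n i.val := by simp [classFinset, hvi]
    have hdX : d * (X.card : ℝ) ≤ ((X.filter (fun u => G.Adj u v)).card : ℝ) := by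
      by_contra hcon
      push_neg at hcon
      exact hvB (Finset.mem_coe.mpr (Finset.mem_filter.mpr ⟨hvmem, hcon⟩))
    exact key_estimate r n hr ε d hε hd hεd G hsr X hX hXcard hn hd1 hXsub hXεn
      i hi v hvi hdX
  have hfin : (↑B : Set (MV r n)).Finite := B.finite_toSet
  calc (Set.ncard {v : MV r n | v.1 = i ∧
        (Set.ncard {g : {k : Fin r // k.val ≠ 0} → MV r n |
          IsTupleFX r n G d X g ∧ ∃ k, g k = v} : ℝ) <
            (1 - 2 * ((r : ℝ) - 2) * ε) * (n : ℝ) ^ (r - 2)} : ℝ)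
      ≤ (Set.ncard (↑B : Set (MV r n)) : ℝ) := by
        exact_mod_cast Set.ncard_le_ncard hsub hfin
    _ = (B.card : ℝ) := by rw [Set.ncard_coe_finset]
    _ ≤ ε * n := hBcard.le
end
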